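/- arXiv:1912.02159 — 6 statements merged into one kernel-verified Lean document; each statement's English description precedes it below -/
import Mathlib

section
/- For every s ∈ ℂ with |Im(s)| < T and every z ∈ ℂ with Re(z) > 1, the series Σ_n |s − iμ_n|^{−Re(z)} converges; in particular Σ_n (s − iμ_n)^{−z} converges absolutely. -/
open MeasureTheory Set
set_option maxHeartbeats 1000000

lemma mu_rpow_summable (T : ℝ) (hT : 0 < T) (μ : ℕ → ℝ) (hμ : ∀ n, T ≤ μ n)
    (hV : ∀ t : ℝ, 0 < t → Summable fun n => Real.exp (-(μ n) * t))
    (C : ℝ) (hC : 0 < C)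
    (hCV : ∀ t ∈ Ioc (0 : ℝ) 1, (∑' n, Real.exp (-(μ n) * t)) ≤ C / t)
    (a : ℝ) (ha : 1 < a) : Summable fun n => μ n ^ (-a) := by
  set t : ℕ → ℝ := fun k => 1 / (2 ^ (k + 1) * T) with ht
  have htpos : ∀ k, 0 < t k := fun k => by positivity
  set F : ℕ × ℕ → ℝ := fun p => ((2:ℝ) ^ p.1 * T) ^ (-a) * Real.exp (-(μ p.2) * t p.1)
    with hF
  have hFnonneg : 0 ≤ F := fun p => by positivity
  -- slice summability in n
  have hslice : ∀ k, Summable fun n => F (k, n) := fun k =>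
    ((hV (t k) (htpos k)).mul_left (((2:ℝ) ^ k * T) ^ (-a)))
  -- bound each slice sum
  have hVbound : ∀ k, (∑' n, Real.exp (-(μ n) * t k)) ≤ C * (2 ^ (k + 1) * T + 1) := by
    intro k
    rcases le_or_gt (t k) 1 with h1 | h1
    · have h := hCV (t k) ⟨htpos k, h1⟩
      refine h.trans ?_
      have h4 : (0:ℝ) < 2 ^ (k+1) * T := by positivity
      rw [ht]
      dsimp only
      rw [one_div, div_eq_mul_inv, inv_inv]
      nlinarith
    · have hmono : ∀ n, Real.exp (-(μ n) * t k) ≤ Real.exp (-(μ n) * 1) := by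
        intro n
        apply Real.exp_le_exp.mpr
        have h0 : 0 < μ n := lt_of_lt_of_le hT (hμ n)
        nlinarith
      have h2 : (∑' n, Real.exp (-(μ n) * t k)) ≤ ∑' n, Real.exp (-(μ n) * 1) :=
        Summable.tsum_le_tsum hmono (hV _ (htpos k)) (hV 1 one_pos)
      have h3 := hCV 1 ⟨one_pos, le_refl 1⟩
      have h4 : (0:ℝ) < 2 ^ (k+1) * T := by positivity
      calc (∑' n, Real.exp (-(μ n) * t k)) ≤ C / 1 := h2.trans h3
        _ = C := div_one C
        _ ≤ C * (2 ^ (k + 1) * T + 1) := by nlinarith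
  -- geometric domination for the sum over k
  have hgeo : Summable fun k : ℕ => ((2:ℝ) ^ k * T) ^ (-a) * (C * (2 ^ (k + 1) * T + 1)) := by
    have hq : (2:ℝ) ^ (1 - a) < 1 :=
      Real.rpow_lt_one_of_one_lt_of_neg one_lt_two (by linarith)
    have hq0 : (0:ℝ) ≤ 2 ^ (1 - a) := Real.rpow_nonneg (by norm_num) _
    have hsum : Summable fun k : ℕ => (T ^ (-a) * (C * (2 * T + 2))) * ((2:ℝ) ^ (1 - a)) ^ k :=
      (summable_geometric_of_lt_one hq0 hq).mul_left _
    refine Summable.of_nonneg_of_le (fun k => by positivity) (fun k => ?_) hsum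
    have h2k : ((2:ℝ) ^ k * T) ^ (-a) = T ^ (-a) * ((2:ℝ) ^ (-a)) ^ k := by
      rw [Real.mul_rpow (by positivity) hT.le, ← Real.rpow_natCast (2:ℝ) k,
        ← Real.rpow_natCast ((2:ℝ) ^ (-a)) k, ← Real.rpow_mul (by norm_num),
        ← Real.rpow_mul (by norm_num), mul_comm (k:ℝ) (-a), mul_comm]
    have hsplit : ((2:ℝ) ^ (1 - a)) ^ k = ((2:ℝ) ^ (-a)) ^ k * 2 ^ k := by
      rw [← Real.rpow_natCast ((2:ℝ) ^ (1 - a)) k, ← Real.rpow_natCast ((2:ℝ) ^ (-a)) k,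
        ← Real.rpow_natCast (2:ℝ) k, ← Real.rpow_mul (by norm_num),
        ← Real.rpow_mul (by norm_num), ← Real.rpow_add (by norm_num)]
      ring_nf
    have hpk : (0:ℝ) < ((2:ℝ) ^ (-a)) ^ k := by positivity
    have h1k : (1:ℝ) ≤ 2 ^ k := one_le_pow₀ one_le_two
    rw [h2k, hsplit]
    have hTa : (0:ℝ) < T ^ (-a) := Real.rpow_pos_of_pos hT _
    have : C * (2 ^ (k + 1) * T + 1) ≤ (C * (2 * T + 2)) * 2 ^ k := by
      have : (2:ℝ) ^ (k+1) = 2 * 2 ^ k := by ring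
      rw [this]
      nlinarith [pow_pos (two_pos (α := ℝ)) k]
    calc T ^ (-a) * ((2:ℝ) ^ (-a)) ^ k * (C * (2 ^ (k + 1) * T + 1))
        ≤ T ^ (-a) * ((2:ℝ) ^ (-a)) ^ k * ((C * (2 * T + 2)) * 2 ^ k) := by
          apply mul_le_mul_of_nonneg_left this (by positivity)
      _ = T ^ (-a) * (C * (2 * T + 2)) * (((2:ℝ) ^ (-a)) ^ k * 2 ^ k) := by ring
  -- product summability
  have hFsum : Summable F := by
    refine (summable_prod_of_nonneg hFnonneg).mpr ⟨hslice, ?_⟩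
    refine Summable.of_nonneg_of_le (fun k => tsum_nonneg fun n => hFnonneg (k, n))
      (fun k => ?_) hgeo
    rw [show (fun n => F (k, n)) = fun n => ((2:ℝ) ^ k * T) ^ (-a)
        * Real.exp (-(μ n) * t k) from rfl, tsum_mul_left]
    exact mul_le_mul_of_nonneg_left (hVbound k) (by positivity)
  have hFswap : Summable fun p : ℕ × ℕ => F p.swap := hFsum.prod_symm
  have hswapn : ∀ n, Summable fun k => F (k, n) := fun n =>
    ((summable_prod_of_nonneg (fun p => hFnonneg p.swap)).mp hFswap).1 n
  have hdom : Summable fun n => Real.exp 1 * ∑' k, F (k, n) := by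
    exact (((summable_prod_of_nonneg (fun p => hFnonneg p.swap)).mp hFswap).2).mul_left _
  refine Summable.of_nonneg_of_le (fun n => Real.rpow_nonneg
    (le_of_lt (lt_of_lt_of_le hT (hμ n))) _) (fun n => ?_) hdom
  -- pointwise bound: choose dyadic k
  have hμn : 0 < μ n := lt_of_lt_of_le hT (hμ n)
  have hr1 : 1 ≤ μ n / T := (one_le_div hT).mpr (hμ n)
  set k := ⌊Real.logb 2 (μ n / T)⌋₊ with hk
  have hlb : Real.logb 2 (μ n / T) = Real.logb 2 (μ n / T) := rfl
  have hlognn : 0 ≤ Real.logb 2 (μ n / T) := Real.logb_nonneg one_lt_two hr1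
  have hrpos : 0 < μ n / T := by positivity
  have hlow : (2:ℝ) ^ k ≤ μ n / T := by
    have h1 : ((k:ℝ)) ≤ Real.logb 2 (μ n / T) := Nat.floor_le hlognn
    calc (2:ℝ) ^ k = (2:ℝ) ^ (k:ℝ) := (Real.rpow_natCast 2 k).symm
      _ ≤ (2:ℝ) ^ Real.logb 2 (μ n / T) :=
          Real.rpow_le_rpow_of_exponent_le one_le_two h1
      _ = μ n / T := Real.rpow_logb two_pos (by norm_num) hrpos
  have hhigh : μ n / T ≤ (2:ℝ) ^ (k + 1) := by
    have h1 : Real.logb 2 (μ n / T) < (k:ℝ) + 1 := Nat.lt_floor_add_one _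
    calc μ n / T = (2:ℝ) ^ Real.logb 2 (μ n / T) :=
          (Real.rpow_logb two_pos (by norm_num) hrpos).symm
      _ ≤ (2:ℝ) ^ ((k:ℝ) + 1) :=
          Real.rpow_le_rpow_of_exponent_le one_le_two h1.le
      _ = (2:ℝ) ^ (k + 1) := by
          rw [← Real.rpow_natCast 2 (k+1)]; push_cast; ring_nf
  have hlow' : (2:ℝ) ^ k * T ≤ μ n := by
    have h6 := mul_le_mul_of_nonneg_right hlow hT.le
    rwa [div_mul_cancel₀ _ hT.ne'] at h6
  have hhigh' : μ n ≤ 2 ^ (k + 1) * T := by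
    rw [div_le_iff₀ hT] at hhigh; linarith
  have hexp : Real.exp (-1) ≤ Real.exp (-(μ n) * t k) := by
    apply Real.exp_le_exp.mpr
    have h4 : (0:ℝ) < 2 ^ (k+1) * T := by positivity
    have : μ n * t k ≤ 1 := by
      rw [ht]
      dsimp only
      rw [mul_one_div, div_le_one h4]
      exact hhigh'
    nlinarith
  have hmono : μ n ^ (-a) ≤ ((2:ℝ) ^ k * T) ^ (-a) :=
    Real.rpow_le_rpow_of_nonpos (by positivity) hlow' (by linarith)
  have key : μ n ^ (-a) ≤ Real.exp 1 * F (k, n) := by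
    have : ((2:ℝ) ^ k * T) ^ (-a) * Real.exp (-1) ≤ F (k, n) := by
      exact mul_le_mul_of_nonneg_left hexp (by positivity)
    have h5 : μ n ^ (-a) * Real.exp (-1) ≤ F (k, n) :=
      le_trans (mul_le_mul_of_nonneg_right hmono (Real.exp_pos _).le) this
    have := mul_le_mul_of_nonneg_left h5 (Real.exp_pos 1).le
    rw [show Real.exp 1 * (μ n ^ (-a) * Real.exp (-1))
        = μ n ^ (-a) * (Real.exp 1 * Real.exp (-1)) from by ring,
      ← Real.exp_add] at this
    simpa using this
  refine key.trans ?_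
  exact mul_le_mul_of_nonneg_left (Summable.le_tsum (hswapn n) k fun j _ => hFnonneg (j, n))
    (Real.exp_pos 1).le

/-- Absolute convergence of the Hurwitz-type spectral zeta series
`Σ_n (s - iμ_n)^(-z)` for `|Im s| < T` and `Re z > 1`. -/
theorem spectral_zeta_summable (T : ℝ) (hT : 0 < T) (μ : ℕ → ℝ) (hμ : ∀ n, T ≤ μ n)
    (hV : ∀ t : ℝ, 0 < t → Summable fun n => Real.exp (-(μ n) * t))
    (C : ℝ) (hC : 0 < C)
    (hCV : ∀ t ∈ Ioc (0 : ℝ) 1, (∑' n, Real.exp (-(μ n) * t)) ≤ C / t)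
    (s : ℂ) (hs : |s.im| < T) (z : ℂ) (hz : 1 < z.re) :
    Summable (fun n => ‖s - Complex.I * μ n‖ ^ (-z.re)) ∧
    Summable (fun n => ‖(s - Complex.I * μ n) ^ (-z)‖) := by
  have hμsum := mu_rpow_summable T hT μ hμ hV C hC hCV z.re hz
  set δ : ℝ := (T - |s.im|) / T with hδ
  have hδ0 : 0 < δ := div_pos (by linarith) hT
  have hδT : δ * T = T - |s.im| := div_mul_cancel₀ _ hT.ne'
  have hnorm : ∀ n, δ * μ n ≤ ‖s - Complex.I * μ n‖ := by
    intro n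
    have him : (s - Complex.I * (μ n : ℂ)).im = s.im - μ n := by
      simp [Complex.sub_im, Complex.mul_im]
    have h1 : |(s - Complex.I * (μ n : ℂ)).im| ≤ ‖s - Complex.I * (μ n : ℂ)‖ :=
      Complex.abs_im_le_norm _
    rw [him] at h1
    have h2 : μ n - s.im ≤ |s.im - μ n| := by
      rw [abs_sub_comm]; exact le_abs_self _
    have h3 : δ * μ n ≤ μ n - s.im := by
      have hsim : s.im ≤ |s.im| := le_abs_self _
      nlinarith [mul_nonneg (abs_nonneg s.im) (sub_nonneg.mpr (hμ n)), hμ n]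
    linarith
  have hμpos : ∀ n, (0:ℝ) < δ * μ n := fun n =>
    mul_pos hδ0 (lt_of_lt_of_le hT (hμ n))
  have hfirst : Summable (fun n => ‖s - Complex.I * μ n‖ ^ (-z.re)) := by
    refine Summable.of_nonneg_of_le (fun n => Real.rpow_nonneg (norm_nonneg _) _)
      (fun n => ?_) (hμsum.mul_left (δ ^ (-z.re)))
    have h4 : ‖s - Complex.I * (μ n : ℂ)‖ ^ (-z.re) ≤ (δ * μ n) ^ (-z.re) :=
      Real.rpow_le_rpow_of_nonpos (hμpos n) (hnorm n) (by linarith)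
    refine h4.trans ?_
    rw [Real.mul_rpow hδ0.le (lt_of_lt_of_le hT (hμ n)).le]
  refine ⟨hfirst, ?_⟩
  refine Summable.of_nonneg_of_le (fun n => norm_nonneg _) (fun n => ?_)
    (hfirst.mul_right (Real.exp (Real.pi * |z.im|)))
  set w : ℂ := s - Complex.I * (μ n : ℂ) with hw
  have hwpos : 0 < ‖w‖ := lt_of_lt_of_le (hμpos n) (hnorm n)
  have habs := Complex.norm_cpow_le w (-z)
  refine habs.trans ?_
  have hre : (-z).re = -z.re := by simp
  have him : (-z).im = -z.im := by simp
  rw [hre, him]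
  have hargle : -(Real.pi * |z.im|) ≤ w.arg * -z.im := by
    have h1 : |w.arg * -z.im| ≤ Real.pi * |z.im| := by
      rw [abs_mul, abs_neg]
      exact mul_le_mul_of_nonneg_right (abs_le.mpr ⟨Complex.neg_pi_lt_arg w |>.le, Complex.arg_le_pi w⟩)
        (abs_nonneg _)
    linarith [neg_abs_le (w.arg * -z.im)]
  have hexp : Real.exp (-(Real.pi * |z.im|)) ≤ Real.exp (w.arg * -z.im) :=
    Real.exp_le_exp.mpr hargle
  calc ‖w‖ ^ (-z.re) / Real.exp (w.arg * -z.im)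
      ≤ ‖w‖ ^ (-z.re) / Real.exp (-(Real.pi * |z.im|)) :=
        div_le_div_of_nonneg_left (Real.rpow_nonneg (norm_nonneg w) _)
          (Real.exp_pos _) hexp
    _ = ‖w‖ ^ (-z.re) * Real.exp (Real.pi * |z.im|) := by
        rw [Real.exp_neg, div_eq_mul_inv, inv_inv]
end

section
/- For every s ∈ ℂ with |Im(s)| < T and every z ∈ ℂ with Re(z) > 1, the integral ∫₀^∞ V(t)·e^{−ist}·t^{z−1} dt converges absolutely and equals Γ(z)·e^{−iπz/2}·Σ_n (s − iμ_n)^{−z}. -/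
open MeasureTheory Set Complex Filter

lemma rpow_exp_integrableOn {σ r : ℝ} (hσ : 0 < σ) (hr : 0 < r) :
    IntegrableOn (fun t : ℝ => t ^ (σ - 1) * Real.exp (-(r * t))) (Ioi 0) := by
  have h := Real.GammaIntegral_convergent hσ
  rw [← mul_zero r, ← integrableOn_Ioi_comp_mul_left_iff _ _ hr] at h
  refine IntegrableOn.congr_fun (h.const_mul ((r : ℝ) ^ (σ - 1))⁻¹) (fun t ht => ?_)
    measurableSet_Ioi
  have ht' : (0:ℝ) < t := by simpa [mul_zero] using ht
  rw [Real.mul_rpow hr.le ht'.le]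
  field_simp [(Real.rpow_pos_of_pos hr (σ-1)).ne']

lemma norm_cpow_exp {z w : ℂ} (t : ℝ) (ht : 0 < t) :
    ‖(t:ℂ) ^ (z - 1) * Complex.exp (-(w * t))‖ = t ^ (z.re - 1) * Real.exp (-(w.re * t)) := by
  rw [norm_mul, Complex.norm_cpow_eq_rpow_re_of_pos ht, Complex.norm_exp]
  simp [Complex.sub_re, Complex.one_re, Complex.neg_re, Complex.mul_re,
    Complex.ofReal_re, Complex.ofReal_im]

lemma cpow_exp_contOn {z w : ℂ} :
    ContinuousOn (fun t : ℝ => (t:ℂ) ^ (z - 1) * Complex.exp (-(w * t))) (Ioi 0) := by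
  apply ContinuousOn.mul
  · intro t ht
    exact (Complex.continuousAt_ofReal_cpow_const t _ (Or.inr (ne_of_gt ht))).continuousWithinAt
  · exact (Complex.continuous_exp.comp ((continuous_const.mul Complex.continuous_ofReal).neg)).continuousOn

lemma cpow_exp_integrableOn {z w : ℂ} (hz : 0 < z.re) (hw : 0 < w.re) :
    IntegrableOn (fun t : ℝ => (t:ℂ) ^ (z - 1) * Complex.exp (-(w * t))) (Ioi 0) := by
  refine Integrable.mono' (rpow_exp_integrableOn hz hw)
    (cpow_exp_contOn.aestronglyMeasurable measurableSet_Ioi) ?_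
  filter_upwards [ae_restrict_mem measurableSet_Ioi] with t ht
  exact le_of_eq (norm_cpow_exp t ht)

lemma norm_cpow_exp' (y w : ℂ) (t : ℝ) (ht : 0 < t) :
    ‖(t:ℂ) ^ y * Complex.exp (-(w * t))‖ = t ^ y.re * Real.exp (-(w.re * t)) := by
  rw [norm_mul, Complex.norm_cpow_eq_rpow_re_of_pos ht, Complex.norm_exp]
  simp [Complex.neg_re, Complex.mul_re, Complex.ofReal_re, Complex.ofReal_im]

lemma cpow_exp_tendsto_atTop {z w : ℂ} (hw : 0 < w.re) :
    Tendsto (fun t : ℝ => (t:ℂ) ^ z * Complex.exp (-(w * t))) atTop (nhds 0) := by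
  apply squeeze_zero_norm' ?_
    (by simpa [neg_mul] using tendsto_rpow_mul_exp_neg_mul_atTop_nhds_zero z.re w.re hw)
  filter_upwards [eventually_gt_atTop (0:ℝ)] with t ht
  exact le_of_eq (norm_cpow_exp' z w t ht)

lemma cpow_exp_continuousWithinAt {z w : ℂ} (hz : 0 < z.re) (hw : 0 < w.re) :
    ContinuousWithinAt (fun t : ℝ => (t:ℂ) ^ z * Complex.exp (-(w * t))) (Ici 0) 0 := by
  have hz0 : z ≠ 0 := fun h => by simp [h] at hz
  have hf0 : ((0:ℝ):ℂ) ^ z * Complex.exp (-(w * (0:ℝ))) = 0 := by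
    simp [Complex.zero_cpow hz0]
  show Tendsto (fun t : ℝ => (t:ℂ) ^ z * Complex.exp (-(w * t))) (nhdsWithin 0 (Ici 0))
      (nhds (((0:ℝ):ℂ) ^ z * Complex.exp (-(w * ((0:ℝ):ℂ)))))
  rw [show ((0:ℝ):ℂ) ^ z * Complex.exp (-(w * ((0:ℝ):ℂ))) = 0 from hf0]
  have hg : Tendsto (fun t : ℝ => t ^ z.re) (nhdsWithin 0 (Ici 0)) (nhds 0) := by
    have := (Real.continuousAt_rpow_const 0 z.re (Or.inr hz.le)).continuousWithinAt
      (s := Ici (0:ℝ))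
    simpa [ContinuousWithinAt, Real.zero_rpow hz.ne'] using this
  apply squeeze_zero_norm' ?_ hg
  filter_upwards [self_mem_nhdsWithin] with t (ht : (0:ℝ) ≤ t)
  rcases eq_or_lt_of_le ht with h | h
  · simp [← h, Complex.zero_cpow hz0, Real.zero_rpow hz.ne']
  · rw [norm_cpow_exp' z w t h]
    nth_rewrite 2 [← mul_one (t ^ z.re)]
    gcongr
    · exact Real.exp_le_one_iff.mpr (by nlinarith [hw, h])

lemma hasDerivAt_cpow_exp {z w : ℂ} {t : ℝ} (ht : 0 < t) :
    HasDerivAt (fun u : ℝ => (u:ℂ) ^ z * Complex.exp (-(w * u)))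
      (z * ((t:ℂ) ^ (z - 1) * Complex.exp (-(w * t)))
        - w * ((t:ℂ) ^ z * Complex.exp (-(w * t)))) t := by
  have hofReal : HasDerivAt (fun u : ℝ => ((u:ℝ):ℂ)) 1 t :=
    (hasDerivAt_id ((t:ℝ):ℂ)).comp_ofReal
  have h1 : HasDerivAt (fun u : ℝ => ((u:ℝ):ℂ) ^ z) (z * (t:ℂ) ^ (z - 1)) t := by
    have := (HasDerivAt.cpow_const (c := z) (hasDerivAt_id ((t:ℝ):ℂ))
      (by simp [Complex.mem_slitPlane_iff, ht] : ((t:ℝ):ℂ) ∈ Complex.slitPlane)).comp_ofReal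
    simpa using this
  have h2 : HasDerivAt (fun u : ℝ => Complex.exp (-(w * u)))
      (Complex.exp (-(w * t)) * -w) t := by
    have := ((hofReal.const_mul w).neg).cexp
    simpa using this
  have := h1.mul h2
  exact this.congr_deriv (by ring)

lemma ibp_aux {z w : ℂ} (hz : 0 < z.re) (hw : 0 < w.re) :
    w * ∫ t in Ioi (0:ℝ), (t:ℂ) ^ z * Complex.exp (-(w * t))
      = z * ∫ t in Ioi (0:ℝ), (t:ℂ) ^ (z - 1) * Complex.exp (-(w * t)) := by
  have hz0 : z ≠ 0 := fun h => by simp [h] at hz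
  have hint1 : IntegrableOn (fun t : ℝ => (t:ℂ) ^ (z-1) * Complex.exp (-(w*t))) (Ioi 0) :=
    cpow_exp_integrableOn hz hw
  have hint2 : IntegrableOn (fun t : ℝ => (t:ℂ) ^ z * Complex.exp (-(w*t))) (Ioi 0) := by
    have := cpow_exp_integrableOn (z := z + 1)
      (by simp only [Complex.add_re, Complex.one_re]; linarith) hw
    simpa [add_sub_cancel_right] using this
  have hder : ∀ t ∈ Ioi (0:ℝ), HasDerivAt (fun u : ℝ => (u:ℂ) ^ z * Complex.exp (-(w * u)))
      (z * ((t:ℂ) ^ (z - 1) * Complex.exp (-(w * t)))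
        - w * ((t:ℂ) ^ z * Complex.exp (-(w * t)))) t := fun t ht => hasDerivAt_cpow_exp ht
  have hint' : IntegrableOn (fun t : ℝ =>
      z * ((t:ℂ) ^ (z - 1) * Complex.exp (-(w * t)))
        - w * ((t:ℂ) ^ z * Complex.exp (-(w * t)))) (Ioi 0) :=
    (hint1.const_mul z).sub (hint2.const_mul w)
  have hFTC := integral_Ioi_of_hasDerivAt_of_tendsto
    (cpow_exp_continuousWithinAt hz hw) hder hint' (cpow_exp_tendsto_atTop hw)
  rw [MeasureTheory.integral_sub (hint1.const_mul z) (hint2.const_mul w),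
    MeasureTheory.integral_const_mul, MeasureTheory.integral_const_mul] at hFTC
  have hf0 : ((0:ℝ):ℂ) ^ z * Complex.exp (-(w * ((0:ℝ):ℂ))) = 0 := by
    simp [Complex.zero_cpow hz0]
  rw [hf0] at hFTC
  linear_combination -hFTC

lemma key_integral {z : ℂ} (hz : 0 < z.re) {w : ℂ} (hw : 0 < w.re) :
    ∫ t in Ioi (0:ℝ), (t:ℂ) ^ (z - 1) * Complex.exp (-(w * t))
      = Complex.Gamma z * w ^ (-z) := by
  have hwne : w ≠ 0 := fun h => by simp [h] at hw
  set c : ℝ := w.re with hcdef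
  have hc0 : 0 < c := hw
  set v : ℝ → ℂ := fun x => (c:ℂ) + x * Complex.I with hv
  have hvre : ∀ x : ℝ, (v x).re = c := by intro x; simp [hv]
  have hvre' : ∀ x : ℝ, 0 < (v x).re := fun x => by rw [hvre]; exact hc0
  have hvne : ∀ x, v x ≠ 0 := fun x h => by
    have := hvre' x; rw [h] at this; simp at this
  have hvderiv : ∀ x : ℝ, HasDerivAt v Complex.I x := by
    intro x
    have := (((hasDerivAt_id ((x:ℝ):ℂ)).comp_ofReal).mul_const Complex.I).const_add ((c:ℝ):ℂ)
    simpa [hv] using this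
  have hHderiv : ∀ x : ℝ, HasDerivAt
      (fun y : ℝ => ∫ t in Ioi (0:ℝ), (t:ℂ) ^ (z - 1) * Complex.exp (-(v y * t)))
      (-(Complex.I * z) / v x *
        ∫ t in Ioi (0:ℝ), (t:ℂ) ^ (z - 1) * Complex.exp (-(v x * t))) x := by
    intro x
    have main := hasDerivAt_integral_of_dominated_loc_of_deriv_le
      (μ := volume.restrict (Ioi (0:ℝ))) (x₀ := x) (s := Metric.ball x 1)
      (F := fun y (t : ℝ) => (t:ℂ) ^ (z - 1) * Complex.exp (-(v y * t)))
      (F' := fun y (t : ℝ) => ((t:ℂ) ^ (z - 1) * Complex.exp (-(v y * t))) * -(Complex.I * t))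
      (bound := fun t : ℝ => t ^ z.re * Real.exp (-(c * t)))
      (Metric.ball_mem_nhds x one_pos)
      (Filter.Eventually.of_forall (fun y =>
        cpow_exp_contOn.aestronglyMeasurable measurableSet_Ioi))
      (cpow_exp_integrableOn hz (hvre' x))
      ((cpow_exp_contOn.mul (Continuous.continuousOn (by continuity))).aestronglyMeasurable
        measurableSet_Ioi)
      ?_ ?_ ?_
    · obtain ⟨-, hd⟩ := main
      have heq : (∫ t in Ioi (0:ℝ),
            ((t:ℂ) ^ (z - 1) * Complex.exp (-(v x * t))) * -(Complex.I * t))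
          = -(Complex.I * z) / v x *
            ∫ t in Ioi (0:ℝ), (t:ℂ) ^ (z - 1) * Complex.exp (-(v x * t)) := by
        have h1 : ∀ t ∈ Ioi (0:ℝ),
            ((t:ℂ) ^ (z - 1) * Complex.exp (-(v x * t))) * -(Complex.I * t)
            = -Complex.I * ((t:ℂ) ^ z * Complex.exp (-(v x * t))) := by
          intro t ht
          have hmul : (t:ℂ) ^ (z - 1) * (t:ℂ) ^ (1:ℂ) = (t:ℂ) ^ z := by
            rw [← Complex.cpow_add _ _ (Complex.ofReal_ne_zero.mpr (ne_of_gt ht)),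
              sub_add_cancel]
          rw [← hmul, Complex.cpow_one]
          ring
        rw [setIntegral_congr_fun measurableSet_Ioi h1, MeasureTheory.integral_const_mul]
        have h2 := ibp_aux hz (hvre' x)
        rw [div_mul_eq_mul_div, eq_div_iff (hvne x)]
        linear_combination -Complex.I * h2
      rw [heq] at hd
      exact hd
    · -- h_bound
      filter_upwards [ae_restrict_mem measurableSet_Ioi] with t ht y _
      rw [norm_mul, norm_cpow_exp' (z - 1) (v y) t ht, hvre y]
      rw [norm_neg, norm_mul, Complex.norm_I, one_mul, Complex.norm_real,
        Real.norm_of_nonneg (le_of_lt ht)]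
      rw [Complex.sub_re, Complex.one_re]
      have hts : t ^ (z.re - 1) * Real.exp (-(c * t)) * t = t ^ z.re * Real.exp (-(c * t)) := by
        rw [mul_comm (t ^ (z.re - 1)) (Real.exp (-(c * t))), mul_assoc,
          ← Real.rpow_add_one (ne_of_gt ht) (z.re - 1), sub_add_cancel]
        ring
      rw [hts]
    · -- bound integrable
      have := rpow_exp_integrableOn (σ := z.re + 1) (by linarith) hc0
      exact (by simpa [add_sub_cancel_right] using this :
        IntegrableOn (fun t : ℝ => t ^ z.re * Real.exp (-(c * t))) (Ioi 0))
    · -- h_diff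
      filter_upwards [ae_restrict_mem measurableSet_Ioi] with t ht y _
      have inner : HasDerivAt (fun y : ℝ => -(v y * (t:ℂ))) (-(Complex.I * t)) y :=
        ((hvderiv y).mul_const ((t:ℝ):ℂ)).neg
      have hexp := inner.cexp
      have := hexp.const_mul ((t:ℂ) ^ (z - 1))
      simpa [mul_assoc] using this
  have hGderiv : ∀ x : ℝ, HasDerivAt (fun y : ℝ => (v y) ^ z)
      (z * (v x) ^ (z - 1) * Complex.I) x := by
    intro x
    have hmem : v x ∈ Complex.slitPlane := by
      rw [Complex.mem_slitPlane_iff]; exact Or.inl (hvre' x)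
    have hg := HasDerivAt.cpow_const (c := z) (hasDerivAt_id (v x)) hmem
    have := HasDerivAt.comp x hg (hvderiv x)
    simp only [id, mul_one] at this
    exact this
  have hΦ : ∀ x : ℝ, HasDerivAt (fun y : ℝ =>
      (∫ t in Ioi (0:ℝ), (t:ℂ) ^ (z - 1) * Complex.exp (-(v y * t))) * (v y) ^ z) 0 x := by
    intro x
    have hP := (hHderiv x).mul (hGderiv x)
    refine hP.congr_deriv ?_
    set E := ∫ t in Ioi (0:ℝ), (t:ℂ) ^ (z - 1) * Complex.exp (-(v x * t))
    have hcp : (v x) ^ (z - 1) * (v x) ^ (1:ℂ) = (v x) ^ z := by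
      rw [← Complex.cpow_add _ _ (hvne x), sub_add_cancel]
    rw [← hcp, Complex.cpow_one]
    field_simp [hvne x]
    ring
  have hconst := is_const_of_deriv_eq_zero (f := fun y : ℝ =>
      (∫ t in Ioi (0:ℝ), (t:ℂ) ^ (z - 1) * Complex.exp (-(v y * t))) * (v y) ^ z)
    (fun x => (hΦ x).differentiableAt) (fun x => (hΦ x).deriv) w.im 0
  have hv0 : v 0 = ((c:ℝ):ℂ) := by simp [hv]
  have hvw : v w.im = w := by
    rw [hv]; exact Complex.re_add_im w
  have h0 : (∫ t in Ioi (0:ℝ), (t:ℂ) ^ (z - 1) * Complex.exp (-(v 0 * t))) * (v 0) ^ z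
      = Complex.Gamma z := by
    rw [hv0, Complex.integral_cpow_mul_exp_neg_mul_Ioi hz hc0]
    rw [one_div, ← Complex.ofReal_inv,
      mul_comm (((c⁻¹ : ℝ):ℂ) ^ z) (Complex.Gamma z), mul_assoc,
      ← Complex.mul_cpow_ofReal_nonneg (by positivity) hc0.le, ← Complex.ofReal_mul,
      inv_mul_cancel₀ hc0.ne', Complex.ofReal_one, Complex.one_cpow, mul_one]
  have hfin : (∫ t in Ioi (0:ℝ), (t:ℂ) ^ (z - 1) * Complex.exp (-(w * t))) * w ^ z
      = Complex.Gamma z := by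
    have := hconst
    simp only [hvw] at this
    rw [this, h0]
  have hwz : w ^ z ≠ 0 := by
    rw [Ne, Complex.cpow_eq_zero_iff, not_and_or]
    exact Or.inl hwne
  rw [Complex.cpow_neg]
  field_simp
  linear_combination hfin

lemma cpow_neg_rotate {w : ℂ} (hw : 0 < w.re) (z : ℂ) :
    w ^ (-z) = Complex.exp (-(Real.pi * Complex.I * z) / 2) * (-Complex.I * w) ^ (-z) := by
  have hwne : w ≠ 0 := fun h => by simp [h] at hw
  have hIne : (-Complex.I : ℂ) ≠ 0 := by simp
  have harg : (-Complex.I).arg + w.arg ∈ Ioc (-Real.pi) Real.pi := by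
    rw [Complex.arg_neg_I]
    have h1 : |w.arg| < Real.pi / 2 := Complex.abs_arg_lt_pi_div_two_iff.mpr (Or.inl hw)
    rw [abs_lt] at h1
    constructor
    · linarith [Real.pi_pos]
    · linarith [Real.pi_pos]
  have hlog : Complex.log (-Complex.I * w) = Complex.log (-Complex.I) + Complex.log w :=
    Complex.log_mul hIne hwne harg
  rw [Complex.cpow_def_of_ne_zero (mul_ne_zero hIne hwne), Complex.cpow_def_of_ne_zero hwne,
    hlog, Complex.log_neg_I, ← Complex.exp_add]
  congr 1
  ring

/-- Mellin-transform representation of the spectral series: for `|Im s| < T` and `Re z > 1`,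
`∫₀^∞ V(t)·e^(-ist)·t^(z-1) dt` converges absolutely and equals
`Γ(z)·e^(-iπz/2)·Σ_n (s - iμ_n)^(-z)`, where `V(t) = Σ_n e^(-μ_n t)`. -/
theorem mellin_transform_spectral_series (T : ℝ) (hT : 0 < T) (μ : ℕ → ℝ)
    (hμ : ∀ n, T ≤ μ n)
    (hV : ∀ t : ℝ, 0 < t → Summable fun n => Real.exp (-(μ n) * t))
    (C : ℝ) (hC : 0 < C)
    (hCV : ∀ t ∈ Ioc (0 : ℝ) 1, (∑' n, Real.exp (-(μ n) * t)) ≤ C / t)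
    (s : ℂ) (hs : |s.im| < T) (z : ℂ) (hz : 1 < z.re) :
    IntegrableOn (fun t : ℝ => ((∑' n, Real.exp (-(μ n) * t) : ℝ) : ℂ) *
        Complex.exp (-Complex.I * s * t) * (t : ℂ) ^ (z - 1)) (Ioi 0) ∧
    ∫ t in Ioi (0 : ℝ), ((∑' n, Real.exp (-(μ n) * t) : ℝ) : ℂ) *
        Complex.exp (-Complex.I * s * t) * (t : ℂ) ^ (z - 1)
      = Complex.Gamma z * Complex.exp (-(Real.pi * Complex.I * z) / 2) *
          ∑' n, (s - Complex.I * μ n) ^ (-z) := by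
  have hzre : 0 < z.re := lt_trans one_pos hz
  have haT : s.im < T := lt_of_le_of_lt (le_abs_self _) hs
  have haT' : -T < s.im := neg_lt_of_abs_lt hs
  set a : ℝ := s.im with ha_def
  set w : ℕ → ℂ := fun n => (μ n : ℂ) + Complex.I * s with hw_def
  have hwre : ∀ n, (w n).re = μ n - a := by
    intro n
    simp [hw_def, Complex.add_re, Complex.mul_re, Complex.I_re, Complex.I_im]
    rw [ha_def]
    ring_nf
  have hwre' : ∀ n, 0 < (w n).re := fun n => by
    rw [hwre n]; have := hμ n; linarith
  set F : ℕ → ℝ → ℂ := fun n t => (t:ℂ) ^ (z - 1) * Complex.exp (-(w n * t)) with hF_def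
  have hFint : ∀ n, IntegrableOn (F n) (Ioi 0) := fun n => cpow_exp_integrableOn hzre (hwre' n)
  set g : ℕ → ℝ → ℝ := fun n t => Real.exp (-(μ n) * t) * (Real.exp (a*t) * t ^ (z.re - 1))
    with hg_def
  have hgnn : ∀ n, ∀ t : ℝ, 0 < t → 0 ≤ g n t := by
    intro n t ht
    exact mul_nonneg (Real.exp_pos _).le
      (mul_nonneg (Real.exp_pos _).le (Real.rpow_nonneg ht.le _))
  have hnormF : ∀ n, ∀ t : ℝ, 0 < t → ‖F n t‖ = g n t := by
    intro n t ht
    rw [hF_def, hg_def]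
    simp only
    rw [norm_cpow_exp' (z-1) (w n) t ht, Complex.sub_re, Complex.one_re, hwre n]
    have hexp : Real.exp (-(μ n) * t) * Real.exp (a*t) = Real.exp (-((μ n - a) * t)) := by
      rw [← Real.exp_add]; congr 1; ring
    rw [← mul_assoc, hexp]; ring
  have hgsum : ∀ t : ℝ, 0 < t → Summable (fun n => g n t) :=
    fun t ht => (hV t ht).mul_right (Real.exp (a*t) * t ^ (z.re - 1))
  have hsumF : ∀ t : ℝ, 0 < t → Summable (fun n => F n t) := by
    intro t ht
    apply Summable.of_norm
    exact (hgsum t ht).congr (fun n => (hnormF n t ht).symm)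
  set W : ℝ → ℝ := fun t => (∑' n, Real.exp (-(μ n) * t)) * (Real.exp (a*t) * t ^ (z.re - 1))
    with hW_def
  have htsumW : ∀ t : ℝ, ∑' n, g n t = W t := fun t => tsum_mul_right
  have hVnn : ∀ t : ℝ, 0 ≤ ∑' n, Real.exp (-(μ n) * t) :=
    fun t => tsum_nonneg (fun n => (Real.exp_pos _).le)
  -- finiteness of the dominating lintegral
  have hlintW : ∫⁻ t in Ioi (0:ℝ), ENNReal.ofReal (W t) < ⊤ := by
    have hsplit : (Ioi (0:ℝ)) = Ioc (0:ℝ) 1 ∪ Ioi 1 := (Ioc_union_Ioi_eq_Ioi zero_le_one).symm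
    rw [hsplit, lintegral_union measurableSet_Ioi (Ioc_disjoint_Ioi le_rfl)]
    have h1 : ∫⁻ t in Ioc (0:ℝ) 1, ENNReal.ofReal (W t) < ⊤ := by
      have hbd : ∀ t ∈ Ioc (0:ℝ) 1, W t ≤ (C * Real.exp |a|) * t ^ (z.re - 2) := by
        intro t ht
        obtain ⟨ht0, ht1⟩ := ht
        have hVle := hCV t ⟨ht0, ht1⟩
        have hexple : Real.exp (a*t) ≤ Real.exp |a| := by
          apply Real.exp_le_exp.mpr
          calc a * t ≤ |a| * t := mul_le_mul_of_nonneg_right (le_abs_self a) ht0.le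
            _ ≤ |a| * 1 := mul_le_mul_of_nonneg_left ht1 (abs_nonneg a)
            _ = |a| := mul_one _
        have hrp : (0:ℝ) < t ^ (z.re - 1) := Real.rpow_pos_of_pos ht0 _
        calc W t ≤ (C/t) * (Real.exp |a| * t ^ (z.re - 1)) :=
              mul_le_mul hVle (mul_le_mul_of_nonneg_right hexple hrp.le)
                (by positivity) (div_nonneg hC.le ht0.le)
          _ = (C * Real.exp |a|) * t ^ (z.re - 2) := by
              have hpow : t ^ (z.re - 2) = t ^ (z.re - 1) / t := by
                rw [show z.re - 2 = (z.re - 1) - 1 by ring, Real.rpow_sub ht0, Real.rpow_one]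
              rw [hpow]
              generalize t ^ (z.re - 1) = P
              field_simp
      calc ∫⁻ t in Ioc (0:ℝ) 1, ENNReal.ofReal (W t)
          ≤ ∫⁻ t in Ioc (0:ℝ) 1, ENNReal.ofReal ((C * Real.exp |a|) * t ^ (z.re - 2)) := by
            apply lintegral_mono_ae
            filter_upwards [ae_restrict_mem measurableSet_Ioc] with t ht
            exact ENNReal.ofReal_le_ofReal (hbd t ht)
        _ < ⊤ := by
            apply Integrable.lintegral_lt_top
            apply Integrable.const_mul
            exact (intervalIntegrable_iff_integrableOn_Ioc_of_le zero_le_one).mp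
              (intervalIntegral.intervalIntegrable_rpow' (by linarith))
    have h2 : ∫⁻ t in Ioi (1:ℝ), ENNReal.ofReal (W t) < ⊤ := by
      have hδ : 0 < T - a := by linarith
      have hbd : ∀ t ∈ Ioi (1:ℝ), W t ≤ ((∑' n, Real.exp (-(μ n) * 1)) * Real.exp T) *
          (t ^ (z.re - 1) * Real.exp (-((T - a) * t))) := by
        intro t ht
        have ht1 : (1:ℝ) < t := ht
        have ht0 : (0:ℝ) < t := lt_trans one_pos ht1
        have hVbd : (∑' n, Real.exp (-(μ n) * t))
            ≤ (∑' n, Real.exp (-(μ n) * 1)) * Real.exp (-T*(t-1)) := by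
          calc (∑' n, Real.exp (-(μ n) * t))
              ≤ ∑' n, Real.exp (-(μ n) * 1) * Real.exp (-T*(t-1)) := by
                apply Summable.tsum_le_tsum ?_ (hV t ht0) ((hV 1 one_pos).mul_right _)
                intro n
                rw [← Real.exp_add]
                apply Real.exp_le_exp.mpr
                nlinarith [mul_nonneg (sub_nonneg.mpr (hμ n)) (sub_nonneg.mpr ht1.le)]
            _ = (∑' n, Real.exp (-(μ n) * 1)) * Real.exp (-T*(t-1)) := tsum_mul_right
        have hnn : 0 ≤ Real.exp (a*t) * t ^ (z.re - 1) :=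
          mul_nonneg (Real.exp_pos _).le (Real.rpow_nonneg ht0.le _)
        have hexp2 : Real.exp (-T*(t-1)) * Real.exp (a*t)
            = Real.exp T * Real.exp (-((T-a)*t)) := by
          rw [← Real.exp_add, ← Real.exp_add]; congr 1; ring
        calc W t ≤ ((∑' n, Real.exp (-(μ n) * 1)) * Real.exp (-T*(t-1))) *
              (Real.exp (a*t) * t ^ (z.re - 1)) := mul_le_mul_of_nonneg_right hVbd hnn
          _ = (∑' n, Real.exp (-(μ n) * 1)) *
              ((Real.exp (-T*(t-1)) * Real.exp (a*t)) * t ^ (z.re - 1)) := by ring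
          _ = ((∑' n, Real.exp (-(μ n) * 1)) * Real.exp T) *
              (t ^ (z.re - 1) * Real.exp (-((T - a) * t))) := by
              rw [hexp2]; ring
      calc ∫⁻ t in Ioi (1:ℝ), ENNReal.ofReal (W t)
          ≤ ∫⁻ t in Ioi (1:ℝ), ENNReal.ofReal (((∑' n, Real.exp (-(μ n) * 1)) * Real.exp T) *
              (t ^ (z.re - 1) * Real.exp (-((T - a) * t)))) := by
            apply lintegral_mono_ae
            filter_upwards [ae_restrict_mem measurableSet_Ioi] with t ht
            exact ENNReal.ofReal_le_ofReal (hbd t ht)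
        _ < ⊤ := by
            apply Integrable.lintegral_lt_top
            apply Integrable.const_mul
            exact (rpow_exp_integrableOn hzre hδ).mono_set (Ioi_subset_Ioi zero_le_one)
    exact ENNReal.add_lt_top.mpr ⟨h1, h2⟩
  -- summability of the integrals of norms
  have hmeas : ∀ n, AEMeasurable (fun t => ENNReal.ofReal (g n t))
      (volume.restrict (Ioi (0:ℝ))) := by
    intro n
    apply AEMeasurable.congr ((hFint n).aestronglyMeasurable.norm.aemeasurable.ennreal_ofReal)
    filter_upwards [ae_restrict_mem measurableSet_Ioi] with t ht
    rw [hnormF n t ht]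
  have hAeq : ∀ n, ∫ t in Ioi (0:ℝ), ‖F n t‖
      = (∫⁻ t in Ioi (0:ℝ), ENNReal.ofReal (g n t)).toReal := by
    intro n
    rw [MeasureTheory.integral_eq_lintegral_of_nonneg_ae
      (Filter.Eventually.of_forall (fun t => norm_nonneg _))
      (hFint n).aestronglyMeasurable.norm]
    congr 1
    apply lintegral_congr_ae
    filter_upwards [ae_restrict_mem measurableSet_Ioi] with t ht
    rw [hnormF n t ht]
  have hsum_norm : Summable (fun n => ∫ t in Ioi (0:ℝ), ‖F n t‖) := by
    have hA : ∑' n, ∫⁻ t in Ioi (0:ℝ), ENNReal.ofReal (g n t) ≠ ⊤ := by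
      rw [← MeasureTheory.lintegral_tsum hmeas]
      have heq : ∫⁻ t in Ioi (0:ℝ), ∑' n, ENNReal.ofReal (g n t)
          = ∫⁻ t in Ioi (0:ℝ), ENNReal.ofReal (W t) := by
        apply lintegral_congr_ae
        filter_upwards [ae_restrict_mem measurableSet_Ioi] with t ht
        rw [← ENNReal.ofReal_tsum_of_nonneg (fun n => hgnn n t ht) (hgsum t ht), htsumW t]
      rw [heq]
      exact hlintW.ne
    exact (ENNReal.summable_toReal hA).congr (fun n => (hAeq n).symm)
  have hHasSum := MeasureTheory.hasSum_integral_of_summable_integral_norm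
    (μ := volume.restrict (Ioi (0:ℝ))) hFint hsum_norm
  -- pointwise identification of the sum
  have hexp_split : ∀ n, ∀ t : ℝ, Complex.exp (-(w n * t))
      = ((Real.exp (-(μ n) * t) : ℝ):ℂ) * Complex.exp (-Complex.I * s * t) := by
    intro n t
    rw [Complex.ofReal_exp, ← Complex.exp_add]
    congr 1
    simp only [hw_def]
    push_cast
    ring
  have htsumF : ∀ t : ℝ, 0 < t → (∑' n, F n t)
      = ((∑' n, Real.exp (-(μ n) * t) : ℝ):ℂ) * Complex.exp (-Complex.I * s * t) *
        (t:ℂ) ^ (z - 1) := by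
    intro t ht
    have hterm : ∀ n, F n t = ((Real.exp (-(μ n) * t) : ℝ):ℂ) *
        (Complex.exp (-Complex.I * s * t) * (t:ℂ) ^ (z - 1)) := by
      intro n
      rw [hF_def]
      simp only
      rw [hexp_split n t]
      ring
    rw [tsum_congr hterm, tsum_mul_right, ← Complex.ofReal_tsum]
    ring
  -- integrability of the sum
  have hAESM : AEStronglyMeasurable (fun t : ℝ => ∑' n, F n t)
      (volume.restrict (Ioi (0:ℝ))) := by
    apply aestronglyMeasurable_of_tendsto_ae (u := atTop)
      (f := fun N (t : ℝ) => ∑ n ∈ Finset.range N, F n t)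
    · intro N
      exact Finset.aestronglyMeasurable_fun_sum _ (fun n _ => (hFint n).aestronglyMeasurable)
    · filter_upwards [ae_restrict_mem measurableSet_Ioi] with t ht
      exact (hsumF t ht).hasSum.tendsto_sum_nat
  have hHFI : HasFiniteIntegral (fun t : ℝ => ∑' n, F n t) (volume.restrict (Ioi (0:ℝ))) := by
    rw [hasFiniteIntegral_iff_norm]
    calc ∫⁻ t in Ioi (0:ℝ), ENNReal.ofReal ‖∑' n, F n t‖
        ≤ ∫⁻ t in Ioi (0:ℝ), ENNReal.ofReal (W t) := by
          apply lintegral_mono_ae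
          filter_upwards [ae_restrict_mem measurableSet_Ioi] with t ht
          apply ENNReal.ofReal_le_ofReal
          calc ‖∑' n, F n t‖ ≤ ∑' n, ‖F n t‖ :=
                norm_tsum_le_tsum_norm ((hgsum t ht).congr (fun n => (hnormF n t ht).symm))
            _ = ∑' n, g n t := tsum_congr (fun n => hnormF n t ht)
            _ = W t := htsumW t
      _ < ⊤ := hlintW
  have hIntTsum : Integrable (fun t : ℝ => ∑' n, F n t) (volume.restrict (Ioi (0:ℝ))) :=
    ⟨hAESM, hHFI⟩
  constructor
  · apply hIntTsum.congr
    filter_upwards [ae_restrict_mem measurableSet_Ioi] with t ht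
    exact htsumF t ht
  · have h1 : ∫ t in Ioi (0:ℝ), ((∑' n, Real.exp (-(μ n) * t) : ℝ):ℂ) *
        Complex.exp (-Complex.I * s * t) * (t:ℂ) ^ (z - 1)
        = ∫ t in Ioi (0:ℝ), ∑' n, F n t :=
      setIntegral_congr_fun measurableSet_Ioi (fun t ht => (htsumF t ht).symm)
    rw [h1, ← hHasSum.tsum_eq]
    have h2 : ∀ n, (∫ t in Ioi (0:ℝ), F n t)
        = Complex.Gamma z * Complex.exp (-(Real.pi * Complex.I * z)/2) *
          (s - Complex.I * μ n) ^ (-z) := by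
      intro n
      have hk : (∫ t in Ioi (0:ℝ), F n t) = Complex.Gamma z * (w n) ^ (-z) :=
        key_integral hzre (hwre' n)
      rw [hk, cpow_neg_rotate (hwre' n) z]
      have hrot : -Complex.I * w n = s - Complex.I * μ n := by
        rw [hw_def]
        simp only
        linear_combination -s * Complex.I_sq
      rw [hrot]
      ring
    rw [tsum_congr h2, tsum_mul_left]
end

section
/- Suppose (λ_n)_{n∈ℕ} are real numbers with inf_n λ_n > 0, such that θ(t) := Σ_n e^{−λ_n t} converges for every t > 0 and there is a real sequence (a_k)_{k≥0} such that for every N ∈ ℕ, θ(t) = t^{−1/2}·(a₀ + a₁t + ⋯ + a_N t^N) + O(t^{N+1/2}) as t → 0+. Then the Dirichlet series Σ_n λ_n^{−s} converges absolutely for Re(s) > 1/2, and there exists a meromorphic function Z on ℂ with Z(s) = Σ_n λ_n^{−s} for Re(s) > 1/2, such that Z is analytic at every point of ℂ outside {1/2 − n : n ∈ ℕ} and has at most a simple pole at each point s = 1/2 − n, with residue a_n/Γ(1/2 − n). -/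
open Topology Filter Asymptotics
open Topology Filter Asymptotics Set MeasureTheory

namespace SpectralZeta

section Aux


lemma tail {lam : ℕ → ℝ} {ε : ℝ} (hε : 0 < ε) (hlow : ∀ n, ε ≤ lam n)
    (hθ : ∀ t : ℝ, 0 < t → Summable fun n => Real.exp (-(lam n) * t))
    {δ t : ℝ} (hδ : 0 < δ) (ht : δ ≤ t) :
    (∑' n, Real.exp (-(lam n) * t))
      ≤ (∑' n, Real.exp (-(lam n) * δ)) * Real.exp (-ε * (t - δ)) := by
  rw [← tsum_mul_right]
  refine Summable.tsum_le_tsum (fun n => ?_) (hθ t (hδ.trans_le ht)) ((hθ δ hδ).mul_right _)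
  rw [← Real.exp_add, Real.exp_le_exp]
  nlinarith [hlow n, hε.le]

lemma theta_nonneg {lam : ℕ → ℝ} (t : ℝ) : 0 ≤ ∑' n, Real.exp (-(lam n) * t) :=
  tsum_nonneg fun _ => (Real.exp_pos _).le

lemma contOn {lam : ℕ → ℝ} {ε : ℝ} (hε : 0 < ε) (hlow : ∀ n, ε ≤ lam n)
    (hθ : ∀ t : ℝ, 0 < t → Summable fun n => Real.exp (-(lam n) * t)) :
    ContinuousOn (fun t : ℝ => ∑' n, Real.exp (-(lam n) * t)) (Set.Ioi 0) := by
  intro t ht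
  have ht' : (0:ℝ) < t := ht
  have h2 : (0:ℝ) < t/2 := by linarith
  have hc : ContinuousOn (fun x : ℝ => ∑' n, Real.exp (-(lam n) * x)) (Set.Ici (t/2)) := by
    refine continuousOn_tsum (fun n => (Continuous.continuousOn (by continuity)))
      (hθ _ h2) (fun n x hx => ?_)
    have hl : 0 < lam n := hε.trans_le (hlow n)
    rw [Real.norm_eq_abs, Real.abs_exp, Real.exp_le_exp]
    have : t/2 ≤ x := hx
    nlinarith
  exact (hc.continuousAt (Ici_mem_nhds (by linarith))).continuousWithinAt



lemma head {lam : ℕ → ℝ} {a₀ : ℝ}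
    (h : (fun t : ℝ => (∑' n, Real.exp (-(lam n) * t)) - t ^ (-(1/2:ℝ)) * a₀)
        =O[𝓝[>] (0:ℝ)] fun t : ℝ => t ^ ((1:ℝ)/2)) :
    ∃ K δ : ℝ, 0 < δ ∧ δ ≤ 1 ∧ 0 ≤ K ∧
      ∀ t ∈ Set.Ioc (0:ℝ) δ, (∑' n, Real.exp (-(lam n) * t)) ≤ K * t ^ (-(1/2):ℝ) := by
  obtain ⟨C, hC⟩ := h.isBigOWith
  rw [IsBigOWith, eventually_iff] at hC
  obtain ⟨δ', hδ', hsub⟩ := mem_nhdsGT_iff_exists_Ioc_subset.mp hC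
  have hδ'0 : (0:ℝ) < δ' := hδ'
  refine ⟨|C| + |a₀|, min δ' 1, lt_min hδ'0 one_pos, min_le_right _ _,
    by positivity, fun t ht => ?_⟩
  obtain ⟨ht0, htle⟩ := ht
  have ht1 : t ≤ 1 := htle.trans (min_le_right _ _)
  have hmem := hsub ⟨ht0, htle.trans (min_le_left _ _)⟩
  simp only [Set.mem_setOf_eq, Real.norm_eq_abs] at hmem
  have h1 : (∑' n, Real.exp (-(lam n) * t)) - t ^ (-(1/2:ℝ)) * a₀ ≤ |C| * t ^ ((1:ℝ)/2) := by
    calc _ ≤ |(∑' n, Real.exp (-(lam n) * t)) - t ^ (-(1/2:ℝ)) * a₀| := le_abs_self _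
    _ ≤ C * |t ^ ((1:ℝ)/2)| := hmem
    _ ≤ |C| * t ^ ((1:ℝ)/2) := by
        rw [abs_of_nonneg (Real.rpow_nonneg ht0.le _)]
        exact mul_le_mul_of_nonneg_right (le_abs_self _) (Real.rpow_nonneg ht0.le _)
  have h2 : t ^ ((1:ℝ)/2) ≤ t ^ (-(1/2:ℝ)) :=
    Real.rpow_le_rpow_of_exponent_ge ht0 ht1 (by norm_num)
  have h3 : t ^ (-(1/2:ℝ)) * a₀ ≤ t ^ (-(1/2:ℝ)) * |a₀| :=
    mul_le_mul_of_nonneg_left (le_abs_self _) (Real.rpow_nonneg ht0.le _)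
  have h4 : 0 ≤ t ^ (-(1/2:ℝ)) := Real.rpow_nonneg ht0.le _
  nlinarith [abs_nonneg C, abs_nonneg a₀]



lemma summable_rpow {lam : ℕ → ℝ} {ε : ℝ} (hε : 0 < ε) (hlow : ∀ n, ε ≤ lam n)
    (hθ : ∀ t : ℝ, 0 < t → Summable fun n => Real.exp (-(lam n) * t))
    {K δ : ℝ} (hδ0 : 0 < δ) (hK : 0 ≤ K)
    (hhead : ∀ t ∈ Set.Ioc (0:ℝ) δ,
      (∑' n, Real.exp (-(lam n) * t)) ≤ K * t ^ (-(1/2):ℝ))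
    (htail : ∀ t : ℝ, δ ≤ t → (∑' n, Real.exp (-(lam n) * t))
      ≤ (∑' n, Real.exp (-(lam n) * δ)) * Real.exp (-ε * (t - δ)))
    {σ : ℝ} (hσ : 1/2 < σ) : Summable fun n => lam n ^ (-σ) := by
  have hσ0 : (0:ℝ) < σ := by linarith
  have hlam : ∀ n, (0:ℝ) < lam n := fun n => hε.trans_le (hlow n)
  set θ : ℝ → ℝ := fun t => ∑' n, Real.exp (-(lam n) * t) with hθdef
  -- integrability of each term
  have hInt : ∀ n, IntegrableOn (fun t : ℝ => t ^ (σ-1) * Real.exp (-(lam n) * t))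
      (Set.Ioi 0) := by
    intro n
    have := integrableOn_rpow_mul_exp_neg_mul_rpow (p := 1) (s := σ - 1) (b := lam n)
      (by linarith) one_pos (hlam n)
    simpa [Real.rpow_one] using this
  -- value of each lintegral
  have hval : ∀ n, (∫⁻ t in Set.Ioi (0:ℝ),
      ENNReal.ofReal (t ^ (σ-1) * Real.exp (-(lam n) * t)))
      = ENNReal.ofReal ((1 / lam n) ^ σ * Real.Gamma σ) := by
    intro n
    rw [← ofReal_integral_eq_lintegral_ofReal (hInt n)
      ((ae_restrict_iff' measurableSet_Ioi).2 (ae_of_all _ (fun t ht => by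
        have : (0:ℝ) < t := ht
        positivity)))]
    congr 1
    rw [← Real.integral_rpow_mul_exp_neg_mul_Ioi hσ0 (hlam n)]
    refine setIntegral_congr_fun measurableSet_Ioi (fun t ht => ?_)
    rw [neg_mul]
  -- swap sum and integral
  have hswap : (∑' n, ∫⁻ t in Set.Ioi (0:ℝ),
      ENNReal.ofReal (t ^ (σ-1) * Real.exp (-(lam n) * t)))
      = ∫⁻ t in Set.Ioi (0:ℝ), ENNReal.ofReal (t ^ (σ-1) * θ t) := by
    rw [← lintegral_tsum (fun n => by fun_prop)]
    refine setLIntegral_congr_fun_ae measurableSet_Ioi (ae_of_all _ (fun t ht => ?_))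
    have ht : (0:ℝ) < t := ht
    rw [← ENNReal.ofReal_tsum_of_nonneg (fun n => by positivity)
      (((hθ t ht).mul_left _))]
    congr 1
    exact tsum_mul_left
  -- finiteness
  have hfin : (∫⁻ t in Set.Ioi (0:ℝ), ENNReal.ofReal (t ^ (σ-1) * θ t)) < ⊤ := by
    rw [← Set.Ioc_union_Ioi_eq_Ioi hδ0.le]
    refine (lintegral_union_le _ _ _).trans_lt (ENNReal.add_lt_top.2 ⟨?_, ?_⟩)
    · -- head piece
      have II : IntegrableOn (fun t : ℝ => K * t ^ (σ - 3/2)) (Set.Ioc 0 δ) :=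
        ((intervalIntegrable_iff_integrableOn_Ioc_of_le hδ0.le).mp
          (intervalIntegral.intervalIntegrable_rpow' (by linarith))).const_mul K
      refine lt_of_le_of_lt ?_ II.hasFiniteIntegral
      refine setLIntegral_mono' measurableSet_Ioc (fun t ht => ?_)
      refine le_trans (ENNReal.ofReal_le_ofReal ?_) (Real.ofReal_le_enorm _)
      have ht0 : (0:ℝ) < t := ht.1
      calc t ^ (σ-1) * θ t ≤ t ^ (σ-1) * (K * t ^ (-(1/2):ℝ)) :=
            mul_le_mul_of_nonneg_left (hhead t ht) (Real.rpow_nonneg ht0.le _)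
      _ = K * t ^ (σ - 3/2) := by
            rw [mul_comm (t ^ (σ-1)), mul_assoc, ← Real.rpow_add ht0,
              show -(1/2:ℝ) + (σ-1) = σ - 3/2 by ring]
    · -- tail piece
      set C : ℝ := θ δ * Real.exp (ε * δ) with hC
      have hθδ : 0 ≤ θ δ := tsum_nonneg fun _ => (Real.exp_pos _).le
      have hC0 : 0 ≤ C := by positivity
      have II : IntegrableOn (fun t : ℝ => C * (t ^ (σ-1) * Real.exp (-ε * t)))
          (Set.Ioi δ) := by
        refine (IntegrableOn.mono_set ?_ (Set.Ioi_subset_Ioi hδ0.le)).const_mul C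
        have := integrableOn_rpow_mul_exp_neg_mul_rpow (p := 1) (s := σ - 1) (b := ε)
          (by linarith) one_pos hε
        simpa [Real.rpow_one] using this
      refine lt_of_le_of_lt ?_ II.hasFiniteIntegral
      refine setLIntegral_mono' measurableSet_Ioi (fun t ht => ?_)
      refine le_trans (ENNReal.ofReal_le_ofReal ?_) (Real.ofReal_le_enorm _)
      have htδ : δ < t := ht
      have ht0 : (0:ℝ) < t := hδ0.trans htδ
      have h1 : θ t ≤ θ δ * Real.exp (-ε * (t - δ)) := htail t htδ.le
      have h2 : θ δ * Real.exp (-ε * (t - δ)) = C * Real.exp (-ε * t) := by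
        rw [hC, mul_assoc, ← Real.exp_add]
        ring_nf
      calc t ^ (σ-1) * θ t ≤ t ^ (σ-1) * (C * Real.exp (-ε * t)) := by
            rw [← h2]; exact mul_le_mul_of_nonneg_left h1 (Real.rpow_nonneg ht0.le _)
      _ = C * (t ^ (σ-1) * Real.exp (-ε * t)) := by ring
  -- conclude
  have hne : (∑' n, ENNReal.ofReal ((1 / lam n) ^ σ * Real.Gamma σ)) ≠ ⊤ := by
    simp_rw [← hval]
    rw [hswap]
    exact hfin.ne
  have hs1 : Summable fun n => (ENNReal.ofReal ((1 / lam n) ^ σ * Real.Gamma σ)).toReal :=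
    ENNReal.summable_toReal hne
  have hΓ : 0 < Real.Gamma σ := Real.Gamma_pos_of_pos hσ0
  have hs2 : Summable fun n => (1 / lam n) ^ σ * Real.Gamma σ := by
    refine hs1.congr (fun n => ?_)
    rw [ENNReal.toReal_ofReal (mul_nonneg (Real.rpow_nonneg (le_of_lt (div_pos one_pos (hlam n))) _) hΓ.le)]
  refine (hs2.div_const (Real.Gamma σ)).congr (fun n => ?_)
  rw [mul_div_assoc, div_self hΓ.ne', mul_one, one_div, Real.inv_rpow (hlam n).le,
    ← Real.rpow_neg (hlam n).le]



noncomputable def ind (k : ℕ) : ℝ → ℂ :=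
  Set.indicator (Set.Ioc 0 1) (fun t : ℝ => (t : ℂ) ^ ((k : ℂ) - 1/2))

noncomputable def θC (lam : ℕ → ℝ) : ℝ → ℂ :=
  fun t => ((∑' n, Real.exp (-(lam n) * t) : ℝ) : ℂ)

noncomputable def f (lam : ℕ → ℝ) (a : ℕ → ℝ) (N : ℕ) : ℝ → ℂ :=
  fun t => θC lam t - ∑ k ∈ Finset.range (N+1), (a k : ℂ) * ind k t

noncomputable def p (k : ℕ) : ℂ := 1/2 - k

noncomputable def G (lam : ℕ → ℝ) (a : ℕ → ℝ) (N : ℕ) (s : ℂ) : ℂ :=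
  mellin (f lam a N) s + ∑ k ∈ Finset.range (N+1), (a k : ℂ) * (s - p k)⁻¹

noncomputable def Z (lam : ℕ → ℝ) (a : ℕ → ℝ) : ℂ → ℂ :=
  fun s => (Complex.Gamma s)⁻¹ * G lam a ⌈-s.re⌉₊ s

lemma p_re (k : ℕ) : (p k).re = 1/2 - k := by
  simp [p, Complex.sub_re]

lemma p_inj {k m : ℕ} (h : k ≠ m) : p k ≠ p m := by
  simp only [p, sub_right_inj, Ne]
  exact_mod_cast fun hh => h (Nat.cast_injective hh)

lemma ind_hasMellin (k : ℕ) {s : ℂ} (hs : (1:ℝ)/2 - k < s.re) :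
    HasMellin (ind k) s (1 / (s + ((k : ℂ) - 1/2))) := by
  refine hasMellin_cpow_Ioc _ ?_
  have : ((k : ℂ) - 1/2).re = (k : ℝ) - 1/2 := by
    simp [Complex.sub_re]
  rw [this]
  linarith

lemma ind_integrableOn (k : ℕ) : IntegrableOn (ind k) (Set.Ioi 0) := by
  have h := (ind_hasMellin k (s := 1) (by rw [Complex.one_re]; have := Nat.cast_nonneg (α := ℝ) k; linarith)).1
  rw [MellinConvergent] at h
  refine h.congr_fun (fun t _ => ?_) measurableSet_Ioi
  norm_num

variable {lam : ℕ → ℝ} {ε : ℝ} {a : ℕ → ℝ}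

lemma fbot (hasymp : ∀ N : ℕ,
      (fun t : ℝ => (∑' n, Real.exp (-(lam n) * t)) -
          t ^ (-(1 / 2 : ℝ)) * ∑ k ∈ Finset.range (N + 1), a k * t ^ k)
        =O[𝓝[>] (0 : ℝ)] fun t : ℝ => t ^ ((N : ℝ) + 1 / 2)) (N : ℕ) :
    (f lam a N) =O[𝓝[>] (0:ℝ)] fun t : ℝ => t ^ ((N : ℝ) + 1/2) := by
  have h1 : (fun t : ℝ => (((∑' n, Real.exp (-(lam n) * t)) -
      t ^ (-(1/2:ℝ)) * ∑ k ∈ Finset.range (N+1), a k * t ^ k : ℝ) : ℂ))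
      =O[𝓝[>] (0:ℝ)] fun t : ℝ => t ^ ((N : ℝ) + 1/2) := by
    have h := hasymp N
    rw [isBigO_iff] at h ⊢
    obtain ⟨C, hC⟩ := h
    refine ⟨C, ?_⟩
    filter_upwards [hC] with t ht
    rwa [Complex.norm_real]
  refine h1.congr' ?_ EventuallyEq.rfl
  filter_upwards [Ioc_mem_nhdsGT_of_mem (Set.left_mem_Ico.2 one_pos)] with t ht
  obtain ⟨ht0, ht1⟩ := ht
  have hik : ∀ k : ℕ, ind k t = ((t ^ ((k:ℝ) - 1/2) : ℝ) : ℂ) := by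
    intro k
    rw [ind, Set.indicator_of_mem (show t ∈ Set.Ioc (0:ℝ) 1 from ⟨ht0, ht1⟩),
      Complex.ofReal_cpow ht0.le]
    congr 1
    push_cast
    ring
  have hre : ∀ k : ℕ, t ^ ((k:ℝ) - 1/2) = t ^ (-(1/2:ℝ)) * t ^ k := by
    intro k
    rw [show ((k:ℝ) - 1/2) = -(1/2) + k by ring, Real.rpow_add ht0, Real.rpow_natCast]
  simp only [f, θC, hik, hre]
  push_cast
  rw [Finset.mul_sum]
  congr 1
  refine Finset.sum_congr rfl fun k _ => by push_cast; ring

lemma θtop (hε : 0 < ε) (hlow : ∀ n, ε ≤ lam n)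
    (hθ : ∀ t : ℝ, 0 < t → Summable fun n => Real.exp (-(lam n) * t)) :
    (θC lam) =O[atTop] fun t : ℝ => Real.exp (-ε * t) := by
  rw [isBigO_iff]
  refine ⟨(∑' n, Real.exp (-(lam n) * 1)) * Real.exp ε, ?_⟩
  filter_upwards [eventually_ge_atTop (1:ℝ)] with t ht
  have h1 := tail hε hlow hθ one_pos ht
  rw [θC, Complex.norm_real, Real.norm_eq_abs, Real.norm_eq_abs, Real.abs_exp,
    abs_of_nonneg (theta_nonneg t)]
  calc (∑' n, Real.exp (-(lam n) * t))
      ≤ (∑' n, Real.exp (-(lam n) * 1)) * Real.exp (-ε * (t - 1)) := h1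
  _ = (∑' n, Real.exp (-(lam n) * 1)) * Real.exp ε * Real.exp (-ε * t) := by
      rw [mul_assoc, ← Real.exp_add]; ring_nf

lemma ftop (hε : 0 < ε) (hlow : ∀ n, ε ≤ lam n)
    (hθ : ∀ t : ℝ, 0 < t → Summable fun n => Real.exp (-(lam n) * t)) (N : ℕ) :
    (f lam a N) =O[atTop] fun t : ℝ => Real.exp (-ε * t) := by
  refine (θtop hε hlow hθ).congr' ?_ EventuallyEq.rfl
  filter_upwards [eventually_gt_atTop (1:ℝ)] with t ht
  have hz : ∀ k : ℕ, ind k t = 0 := fun k =>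
    Set.indicator_of_notMem (fun hmem => absurd hmem.2 (not_le.2 ht)) _
  simp [f, hz]


lemma θloc (hε : 0 < ε) (hlow : ∀ n, ε ≤ lam n)
    (hθ : ∀ t : ℝ, 0 < t → Summable fun n => Real.exp (-(lam n) * t)) :
    LocallyIntegrableOn (θC lam) (Set.Ioi 0) :=
  (Complex.continuous_ofReal.comp_continuousOn
    (contOn hε hlow hθ)).locallyIntegrableOn measurableSet_Ioi

lemma floc (hε : 0 < ε) (hlow : ∀ n, ε ≤ lam n)
    (hθ : ∀ t : ℝ, 0 < t → Summable fun n => Real.exp (-(lam n) * t)) (N : ℕ) :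
    LocallyIntegrableOn (f lam a N) (Set.Ioi 0) := by
  refine (θloc hε hlow hθ).sub (IntegrableOn.locallyIntegrableOn ?_)
  exact integrable_finset_sum _ (fun k _ => (ind_integrableOn k).const_mul _)

variable (hε : 0 < ε) (hlow : ∀ n, ε ≤ lam n)
    (hθ : ∀ t : ℝ, 0 < t → Summable fun n => Real.exp (-(lam n) * t))
    (hasymp : ∀ N : ℕ,
      (fun t : ℝ => (∑' n, Real.exp (-(lam n) * t)) -
          t ^ (-(1 / 2 : ℝ)) * ∑ k ∈ Finset.range (N + 1), a k * t ^ k)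
        =O[𝓝[>] (0 : ℝ)] fun t : ℝ => t ^ ((N : ℝ) + 1 / 2))

include hε hlow hθ hasymp

lemma fMC {N : ℕ} {s : ℂ} (hs : -((N:ℝ) + 1/2) < s.re) :
    MellinConvergent (f lam a N) s :=
  mellinConvergent_of_isBigO_rpow_exp hε (floc hε hlow hθ N) (ftop hε hlow hθ N)
    (b := -((N:ℝ) + 1/2)) (by simpa using fbot hasymp N) hs

lemma fdiff {N : ℕ} {s : ℂ} (hs : -((N:ℝ) + 1/2) < s.re) :
    DifferentiableAt ℂ (mellin (f lam a N)) s :=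
  mellin_differentiableAt_of_isBigO_rpow_exp hε (floc hε hlow hθ N) (ftop hε hlow hθ N)
    (b := -((N:ℝ) + 1/2)) (by simpa using fbot hasymp N) hs

lemma fanalytic {N : ℕ} {s : ℂ} (hs : -((N:ℝ) + 1/2) < s.re) :
    AnalyticAt ℂ (mellin (f lam a N)) s := by
  have hopen : IsOpen {z : ℂ | -((N:ℝ)+1/2) < z.re} :=
    isOpen_lt continuous_const Complex.continuous_re
  exact DifferentiableOn.analyticAt
    (fun z hz => (fdiff hε hlow hθ hasymp hz).differentiableWithinAt) (hopen.mem_nhds hs)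

lemma mellin_f_succ {N : ℕ} {s : ℂ} (hs : -((N:ℝ)+1/2) < s.re) :
    mellin (f lam a (N+1)) s
      = mellin (f lam a N) s - (a (N+1) : ℂ) * (1/(s + (((N+1:ℕ):ℂ) - 1/2))) := by
  have hm := ind_hasMellin (N+1) (s := s) (by push_cast; linarith)
  have hgM : MellinConvergent (fun t => (a (N+1):ℂ) • ind (N+1) t) s := hm.1.const_smul _
  have hsub := hasMellin_sub (fMC hε hlow hθ hasymp hs) hgM
  have hfun : f lam a (N+1) = fun t => f lam a N t - (a (N+1):ℂ) • ind (N+1) t := by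
    funext t; simp [f, Finset.sum_range_succ, smul_eq_mul, sub_sub]
  rw [hfun, hsub.2, mellin_const_smul, hm.2, smul_eq_mul]

lemma G_step {N : ℕ} {s : ℂ} (hs : -((N:ℝ)+1/2) < s.re) :
    G lam a (N+1) s = G lam a N s := by
  rw [G, G, Finset.sum_range_succ (f := fun k => (a k:ℂ) * (s - p k)⁻¹),
    mellin_f_succ hε hlow hθ hasymp hs]
  have hc : (1/(s + (((N+1:ℕ):ℂ) - 1/2))) = (s - p (N+1))⁻¹ := by
    rw [one_div, p]; congr 1; push_cast; ring
  rw [hc]; ring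

lemma G_agree (N M : ℕ) (s : ℂ) (hN : -((N:ℝ)+1/2) < s.re) (hM : -((M:ℝ)+1/2) < s.re) :
    G lam a N s = G lam a M s := by
  have key : ∀ N M : ℕ, N ≤ M → ∀ s : ℂ, -((N:ℝ)+1/2) < s.re → G lam a M s = G lam a N s := by
    intro N M h
    induction M, h using Nat.le_induction with
    | base => intro s _; rfl
    | succ M hNM ih =>
        intro s hs
        have hcast : (N:ℝ) ≤ (M:ℝ) := Nat.cast_le.mpr hNM
        have hsM : -((M:ℝ)+1/2) < s.re := by linarith
        rw [G_step hε hlow hθ hasymp hsM, ih s hs]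
  rcases le_total N M with h | h
  · exact (key N M h s hN).symm
  · exact key M N h s hM

lemma Z_eq {N : ℕ} {s : ℂ} (hs : -((N:ℝ)+1/2) < s.re) :
    Z lam a s = (Complex.Gamma s)⁻¹ * G lam a N s := by
  have hceil : -((⌈-s.re⌉₊:ℝ)+1/2) < s.re := by
    have := Nat.le_ceil (-s.re); linarith
  rw [Z, G_agree hε hlow hθ hasymp ⌈-s.re⌉₊ N s hceil hs]

omit hasymp in
lemma mellin_theta {s : ℂ} (hs : 1/2 < s.re)
    (hsum : Summable fun n => lam n ^ (-s.re)) :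
    mellin (θC lam) s = Complex.Gamma s * ∑' n, (lam n : ℂ) ^ (-s) := by
  have hlam : ∀ n, 0 < lam n := fun n => lt_of_lt_of_le hε (hlow n)
  have hs0 : 0 < s.re := by linarith
  have hF : ∀ t ∈ Set.Ioi (0:ℝ),
      HasSum (fun n => (1:ℂ) * Real.exp (-(lam n) * t)) (θC lam t) := by
    intro t ht
    have h := (hθ t ht).hasSum.mapL Complex.ofRealCLM
    simpa [θC, one_mul] using h
  have hsum' : Summable fun n => ‖(1:ℂ)‖ / lam n ^ s.re := by
    refine hsum.congr fun n => ?_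
    rw [Real.rpow_neg (hlam n).le, norm_one, one_div]
  have H := hasSum_mellin (fun n => Or.inr (hlam n)) hs0 hF hsum'
  rw [← H.tsum_eq]
  calc ∑' n, Complex.Gamma s * 1 / (lam n:ℂ) ^ s
      = ∑' n, Complex.Gamma s * (lam n:ℂ) ^ (-s) := by
        refine tsum_congr fun n => ?_
        rw [mul_one, Complex.cpow_neg, div_eq_mul_inv]
  _ = Complex.Gamma s * ∑' n, (lam n:ℂ)^(-s) := tsum_mul_left

omit hε hlow hθ hasymp in
lemma θbot {K δ : ℝ} (hδ0 : 0 < δ) (hK : 0 ≤ K)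
    (hhead : ∀ t ∈ Set.Ioc (0:ℝ) δ,
      (∑' n, Real.exp (-(lam n) * t)) ≤ K * t ^ (-(1/2):ℝ)) :
    (θC lam) =O[𝓝[>] (0:ℝ)] (· ^ (-(1/2:ℝ))) := by
  rw [isBigO_iff]
  refine ⟨K, ?_⟩
  filter_upwards [Ioc_mem_nhdsGT_of_mem (Set.left_mem_Ico.2 hδ0)] with t ht
  rw [θC, Complex.norm_real, Real.norm_eq_abs, Real.norm_eq_abs,
    abs_of_nonneg (theta_nonneg t), abs_of_nonneg (Real.rpow_nonneg ht.1.le _)]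
  exact hhead t ht

omit hasymp in
lemma θMC {K δ : ℝ} (hδ0 : 0 < δ) (hK : 0 ≤ K)
    (hhead : ∀ t ∈ Set.Ioc (0:ℝ) δ,
      (∑' n, Real.exp (-(lam n) * t)) ≤ K * t ^ (-(1/2):ℝ))
    {s : ℂ} (hs : 1/2 < s.re) : MellinConvergent (θC lam) s :=
  mellinConvergent_of_isBigO_rpow_exp hε (θloc hε hlow hθ) (θtop hε hlow hθ)
    (θbot hδ0 hK hhead) hs

omit hε hlow hθ hasymp in
lemma mellin_f0 {s : ℂ} (hs : 1/2 < s.re) (hMCθ : MellinConvergent (θC lam) s) :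
    mellin (f lam a 0) s = mellin (θC lam) s - (a 0:ℂ) * (1/(s + (((0:ℕ):ℂ) - 1/2))) := by
  have hm := ind_hasMellin 0 (s := s) (by push_cast; linarith)
  have hsub := hasMellin_sub hMCθ (hm.1.const_smul ((a 0 : ℂ)))
  have hfun : f lam a 0 = fun t => θC lam t - (a 0:ℂ) • ind 0 t := by
    funext t; simp [f, smul_eq_mul]
  rw [hfun, hsub.2, mellin_const_smul, hm.2, smul_eq_mul]

lemma Z_dirichlet {K δ : ℝ} (hδ0 : 0 < δ) (hK : 0 ≤ K)
    (hhead : ∀ t ∈ Set.Ioc (0:ℝ) δ,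
      (∑' n, Real.exp (-(lam n) * t)) ≤ K * t ^ (-(1/2):ℝ))
    {s : ℂ} (hs : 1/2 < s.re)
    (hsum : Summable fun n => lam n ^ (-s.re)) :
    Z lam a s = ∑' n, (lam n : ℂ) ^ (-s) := by
  have hs0 : -((0:ℕ):ℝ)-1/2 < s.re := by push_cast; linarith
  have hΓ : Complex.Gamma s ≠ 0 := Complex.Gamma_ne_zero_of_re_pos (by linarith)
  rw [Z_eq hε hlow hθ hasymp (N := 0) (by push_cast; linarith), G,
    mellin_f0 hs (θMC hε hlow hθ hδ0 hK hhead hs),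
    mellin_theta hε hlow hθ hs hsum]
  have hpc : (1/(s + (((0:ℕ):ℂ) - 1/2))) = (s - p 0)⁻¹ := by
    rw [one_div, p]; congr 1; push_cast; ring
  rw [hpc, Finset.sum_range_one]
  field_simp
  ring

omit hε hlow hθ hasymp in
lemma mero_sum {S : Finset ℕ} {F : ℕ → ℂ → ℂ} {x : ℂ}
    (h : ∀ k ∈ S, MeromorphicAt (F k) x) :
    MeromorphicAt (fun s => ∑ k ∈ S, F k s) x := by
  classical
  induction S using Finset.induction_on with
  | empty => simpa using MeromorphicAt.const (0:ℂ) x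
  | insert _ _ hnot ih =>
      simp only [Finset.sum_insert hnot]
      exact (h _ (Finset.mem_insert_self _ _)).add
        (ih fun k hk => h k (Finset.mem_insert_of_mem hk))

end Aux

end SpectralZeta


open SpectralZeta in
/-- From the heat-trace expansion `θ(t) = Σ_n e^(-λ_n t) ~ t^(-1/2)(a₀ + a₁t + ⋯)` with
`inf_n λ_n > 0`, the spectral zeta function `Σ_n λ_n^(-s)` converges absolutely for
`Re s > 1/2` and extends to a meromorphic function on `ℂ` analytic outside
`{1/2 - n : n ∈ ℕ}`, with at most a simple pole at each `s = 1/2 - n`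
of residue `a_n / Γ(1/2 - n)`. -/
theorem spectral_zeta_simple_poles (lam : ℕ → ℝ) (ε : ℝ) (hε : 0 < ε)
    (hlow : ∀ n, ε ≤ lam n)
    (hθ : ∀ t : ℝ, 0 < t → Summable fun n => Real.exp (-(lam n) * t))
    (a : ℕ → ℝ)
    (hasymp : ∀ N : ℕ,
      (fun t : ℝ => (∑' n, Real.exp (-(lam n) * t)) -
          t ^ (-(1 / 2 : ℝ)) * ∑ k ∈ Finset.range (N + 1), a k * t ^ k)
        =O[𝓝[>] (0 : ℝ)] fun t : ℝ => t ^ ((N : ℝ) + 1 / 2)) :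
    (∀ s : ℂ, 1 / 2 < s.re → Summable fun n => ‖((lam n : ℂ)) ^ (-s)‖) ∧
    ∃ Z : ℂ → ℂ, MeromorphicOn Z Set.univ ∧
      (∀ s : ℂ, 1 / 2 < s.re → Z s = ∑' n, (lam n : ℂ) ^ (-s)) ∧
      (∀ s : ℂ, (∀ n : ℕ, s ≠ 1 / 2 - n) → AnalyticAt ℂ Z s) ∧
      (∀ n : ℕ, Tendsto (fun s => (s - (1 / 2 - (n : ℂ))) * Z s)
        (𝓝[≠] ((1 / 2 : ℂ) - n)) (𝓝 ((a n : ℂ) / Complex.Gamma (1 / 2 - n)))) := by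
  classical
  have hlam : ∀ n, (0:ℝ) < lam n := fun n => lt_of_lt_of_le hε (hlow n)
  have hasymp0 : (fun t : ℝ => (∑' n, Real.exp (-(lam n) * t)) - t ^ (-(1/2:ℝ)) * (a 0))
      =O[𝓝[>] (0:ℝ)] fun t : ℝ => t ^ ((1:ℝ)/2) := by
    have h := hasymp 0
    simp only [Finset.sum_range_one, pow_zero, mul_one, Nat.cast_zero, zero_add] at h
    exact h
  obtain ⟨K, δ, hδ0, hδ1, hK, hhead⟩ := head hasymp0
  have hsum : ∀ σ : ℝ, 1/2 < σ → Summable fun n => lam n ^ (-σ) := fun σ hσ =>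
    summable_rpow hε hlow hθ hδ0 hK hhead (fun t ht => tail hε hlow hθ hδ0 ht) hσ
  have part1 : ∀ s : ℂ, 1/2 < s.re → Summable fun n => ‖((lam n : ℂ)) ^ (-s)‖ := by
    intro s hs
    refine (hsum s.re hs).congr fun n => ?_
    rw [eq_comm, Complex.norm_cpow_eq_rpow_re_of_pos (hlam n),
      Complex.neg_re]
  have hopenN : ∀ N : ℕ, IsOpen {z : ℂ | -((N:ℝ)+1/2) < z.re} :=
    fun N => isOpen_lt continuous_const Complex.continuous_re
  have hΓA : ∀ s₀ : ℂ, AnalyticAt ℂ (fun s => (Complex.Gamma s)⁻¹) s₀ :=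
    fun s₀ => Complex.differentiable_one_div_Gamma.analyticAt s₀
  -- analyticity away from the poles
  have hZana : ∀ s₀ : ℂ, (∀ n : ℕ, s₀ ≠ 1/2 - (n:ℂ)) → AnalyticAt ℂ (Z lam a) s₀ := by
    intro s₀ hne
    set N := ⌈-s₀.re⌉₊ with hN
    have hsN : -((N:ℝ)+1/2) < s₀.re := by
      have := Nat.le_ceil (-s₀.re); rw [hN]; linarith
    have hsum_ana : AnalyticAt ℂ
        (fun s => ∑ k ∈ Finset.range (N+1), (a k:ℂ) * (s - p k)⁻¹) s₀ := by
      refine Finset.analyticAt_fun_sum _ fun k _ => ?_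
      refine analyticAt_const.mul ((analyticAt_id.sub analyticAt_const).inv ?_)
      exact sub_ne_zero.2 (hne k)
    have hGA : AnalyticAt ℂ (fun s => (Complex.Gamma s)⁻¹ *
        (mellin (f lam a N) s + ∑ k ∈ Finset.range (N+1), (a k:ℂ) * (s - p k)⁻¹)) s₀ :=
      (hΓA s₀).mul ((fanalytic hε hlow hθ hasymp hsN).add hsum_ana)
    refine hGA.congr ?_
    filter_upwards [(hopenN N).mem_nhds hsN] with s hs
    rw [Z_eq hε hlow hθ hasymp (N := N) hs]
    rfl
  -- meromorphy
  have hmero : MeromorphicOn (Z lam a) Set.univ := by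
    intro s₀ _
    by_cases hp : ∀ n : ℕ, s₀ ≠ 1/2 - (n:ℂ)
    · exact (hZana s₀ hp).meromorphicAt
    · push_neg at hp
      obtain ⟨n, rfl⟩ := hp
      have hsN : -((n:ℝ)+1/2) < ((1:ℂ)/2 - (n:ℂ)).re := by
        rw [show ((1:ℂ)/2 - (n:ℂ)) = p n from rfl, p_re]
        have : (0:ℝ) ≤ (n:ℝ) := Nat.cast_nonneg n
        linarith
      have hGm : MeromorphicAt (fun s => (Complex.Gamma s)⁻¹ *
          (mellin (f lam a n) s + ∑ k ∈ Finset.range (n+1), (a k:ℂ) * (s - p k)⁻¹))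
          ((1:ℂ)/2 - (n:ℂ)) := by
        refine (hΓA _).meromorphicAt.mul ?_
        refine (fanalytic hε hlow hθ hasymp hsN).meromorphicAt.add ?_
        refine mero_sum fun k _ => ?_
        exact analyticAt_const.meromorphicAt.mul
          ((analyticAt_id.sub analyticAt_const).meromorphicAt.inv)
      refine hGm.congr ?_
      refine Filter.EventuallyEq.filter_mono ?_ nhdsWithin_le_nhds
      filter_upwards [(hopenN n).mem_nhds hsN] with s hs
      rw [Z_eq hε hlow hθ hasymp (N := n) hs]
      rfl
  -- residues
  have hres : ∀ n : ℕ, Tendsto (fun s => (s - (1/2 - (n:ℂ))) * Z lam a s)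
      (𝓝[≠] ((1/2:ℂ) - n)) (𝓝 ((a n : ℂ) / Complex.Gamma (1/2 - n))) := by
    intro n
    set s₀ : ℂ := 1/2 - (n:ℂ) with hs₀
    have hs₀p : s₀ = p n := rfl
    have hsN : -((n:ℝ)+1/2) < s₀.re := by
      rw [hs₀p, p_re]
      have : (0:ℝ) ≤ (n:ℝ) := Nat.cast_nonneg n
      linarith
    set φ : ℂ → ℂ := fun s => (Complex.Gamma s)⁻¹ *
      ((s - s₀) * mellin (f lam a n) s +
        ((∑ k ∈ Finset.range n, (a k:ℂ) * ((s - s₀) * (s - p k)⁻¹)) + (a n : ℂ))) with hφ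
    have hφana : AnalyticAt ℂ φ s₀ := by
      refine (hΓA s₀).mul (AnalyticAt.add ?_ (AnalyticAt.add ?_ analyticAt_const))
      · exact (analyticAt_id.sub analyticAt_const).mul (fanalytic hε hlow hθ hasymp hsN)
      · refine Finset.analyticAt_fun_sum _ fun k hk => ?_
        refine analyticAt_const.mul ((analyticAt_id.sub analyticAt_const).mul
          ((analyticAt_id.sub analyticAt_const).inv ?_))
        rw [hs₀p]
        exact sub_ne_zero.2 (p_inj (Finset.mem_range.1 hk).ne')
    have hφval : φ s₀ = (a n:ℂ) / Complex.Gamma s₀ := by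
      rw [hφ]
      simp only [sub_self, zero_mul, mul_zero, Finset.sum_const_zero, zero_add]
      rw [inv_mul_eq_div]
    have hEq : ∀ᶠ s in 𝓝[≠] s₀, (s - s₀) * Z lam a s = φ s := by
      filter_upwards [self_mem_nhdsWithin,
        mem_nhdsWithin_of_mem_nhds ((hopenN n).mem_nhds hsN)] with s hne hs
      rw [Z_eq hε hlow hθ hasymp (N := n) hs, hφ]
      have hcan : (s - s₀) * (s - p n)⁻¹ = 1 := by
        rw [← hs₀p]
        exact mul_inv_cancel₀ (sub_ne_zero.2 hne)
      have e1 : (s - s₀) * ((Complex.Gamma s)⁻¹ * G lam a n s)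
          = (Complex.Gamma s)⁻¹ * ((s - s₀) * mellin (f lam a n) s +
            (s - s₀) * ∑ k ∈ Finset.range (n+1), (a k:ℂ) * (s - p k)⁻¹) := by
        rw [G]; ring
      have e2 : (s - s₀) * ∑ k ∈ Finset.range (n+1), (a k:ℂ) * (s - p k)⁻¹
          = (∑ k ∈ Finset.range n, (a k:ℂ) * ((s - s₀) * (s - p k)⁻¹))
            + (a n:ℂ) * ((s - s₀) * (s - p n)⁻¹) := by
        rw [Finset.sum_range_succ, mul_add, Finset.mul_sum]
        congr 1
        · exact Finset.sum_congr rfl fun k _ => by ring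
        · ring
      rw [e1, e2, hcan, mul_one]
    have h1 : Tendsto φ (𝓝[≠] s₀) (𝓝 (φ s₀)) :=
      hφana.continuousAt.tendsto.mono_left nhdsWithin_le_nhds
    rw [hφval] at h1
    rw [hs₀] at h1 ⊢
    have hEq' : (fun s => (s - s₀) * Z lam a s) =ᶠ[𝓝[≠] s₀] φ := hEq
    rw [hs₀] at hEq'
    exact h1.congr' hEq'.symm
  exact ⟨part1, Z lam a, hmero,
    fun s hs => Z_dirichlet hε hlow hθ hasymp hδ0 hK hhead hs (hsum s.re hs),
    hZana, hres⟩
end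

section
/- For every s ∈ ℂ with Re(s) > max(h, 0): the series Σ_n |Log(1 − e^{−s·l_n})| converges; in particular the family ((1 − e^{−s·l_n})^{−ε_n})_{n∈ℕ} is multipliable and ∏_n (1 − e^{−s·l_n})^{−ε_n} = exp(−Σ_n ε_n·Log(1 − e^{−s·l_n})). -/
open Topology Filter

private lemma exp_summable_aux (l : ℕ → ℝ) (hl : ∀ n, 0 < l n)
    (hfin : ∀ T : ℝ, 0 < T → {n : ℕ | l n ≤ T}.Finite)
    (h σ : ℝ)
    (hbdd : IsBoundedUnder (· ≤ ·) atTop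
      (fun T : ℝ => Real.log ({n : ℕ | l n ≤ T}.ncard : ℝ) / T))
    (hent : limsup (fun T : ℝ => Real.log ({n : ℕ | l n ≤ T}.ncard : ℝ) / T) atTop = h)
    (hσ : max h 0 < σ) :
    Summable (fun n => Real.exp (-σ * l n)) := by
  have hσ0 : 0 < σ := lt_of_le_of_lt (le_max_right h 0) hσ
  set a := (max h 0 + σ) / 2 with ha_def
  have ha1 : max h 0 < a := by
    have := hσ; rw [ha_def]; linarith
  have ha2 : a < σ := by rw [ha_def]; linarith
  have ha0 : 0 < a := lt_of_le_of_lt (le_max_right h 0) ha1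
  have hha : h < a := lt_of_le_of_lt (le_max_left h 0) ha1
  have hev : ∀ᶠ T in atTop,
      Real.log ({n : ℕ | l n ≤ T}.ncard : ℝ) / T < a := by
    apply eventually_lt_of_limsup_lt _ hbdd
    rw [hent]; exact hha
  obtain ⟨T0, hT0⟩ := eventually_atTop.mp hev
  set T1 : ℝ := max T0 1 with hT1def
  have hT1pos : (0:ℝ) < T1 := lt_of_lt_of_le one_pos (le_max_right _ _)
  have claim : ∀ k : ℕ, T1 ≤ (k:ℝ) →
      (({n : ℕ | l n ≤ (k:ℝ)}.ncard : ℝ)) ≤ Real.exp (a * k) := by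
    intro k hk
    have hk1 : (1:ℝ) ≤ k := le_trans (le_max_right T0 1) hk
    have hkpos : (0:ℝ) < k := lt_of_lt_of_le one_pos hk1
    have hlog := hT0 (k:ℝ) (le_trans (le_max_left T0 1) hk)
    rw [div_lt_iff₀ hkpos] at hlog
    rcases eq_or_lt_of_le (Nat.cast_nonneg ({n : ℕ | l n ≤ (k:ℝ)}.ncard) :
        (0:ℝ) ≤ _) with hz | hz
    · rw [← hz]; positivity
    · calc (({n : ℕ | l n ≤ (k:ℝ)}.ncard : ℝ))
          = Real.exp (Real.log (({n : ℕ | l n ≤ (k:ℝ)}.ncard : ℝ))) :=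
            (Real.exp_log hz).symm
        _ ≤ Real.exp (a * k) := Real.exp_le_exp.mpr hlog.le
  set A : Finset ℕ := (hfin T1 hT1pos).toFinset with hA
  set r : ℝ := Real.exp (-(σ - a)) with hrdef
  have hr0 : 0 < r := Real.exp_pos _
  have hr1 : r < 1 := by
    rw [hrdef, Real.exp_lt_one_iff]; linarith
  have hgeom : Summable (fun k : ℕ => r ^ k) :=
    summable_geometric_of_lt_one hr0.le hr1
  apply summable_of_sum_le (c := (A.card : ℝ) + Real.exp σ * (1 - r)⁻¹)
  · intro n; positivity
  · intro u
    rw [← Finset.sum_filter_add_sum_filter_not u (fun n => l n ≤ T1)]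
    have part1 : ∑ n ∈ u.filter (fun n => l n ≤ T1), Real.exp (-σ * l n)
        ≤ (A.card : ℝ) := by
      calc ∑ n ∈ u.filter (fun n => l n ≤ T1), Real.exp (-σ * l n)
          ≤ ∑ _n ∈ u.filter (fun n => l n ≤ T1), (1:ℝ) := by
            refine Finset.sum_le_sum fun n _ => ?_
            have : -σ * l n ≤ 0 := by nlinarith [hl n]
            simpa using Real.exp_le_one_iff.mpr this
        _ = ((u.filter (fun n => l n ≤ T1)).card : ℝ) := by simp
        _ ≤ (A.card : ℝ) := by
            refine Nat.cast_le.mpr (Finset.card_le_card fun n hn => ?_)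
            rw [hA, Set.Finite.mem_toFinset]
            exact (Finset.mem_filter.mp hn).2
    have part2 : ∑ n ∈ u.filter (fun n => ¬ l n ≤ T1), Real.exp (-σ * l n)
        ≤ Real.exp σ * (1 - r)⁻¹ := by
      set v := u.filter (fun n => ¬ l n ≤ T1) with hv_def
      have hv : ∀ n ∈ v, T1 < l n := fun n hn =>
        lt_of_not_ge (Finset.mem_filter.mp hn).2
      rw [← Finset.sum_fiberwise_of_maps_to
        (g := fun n => ⌈l n⌉₊) (t := v.image (fun n => ⌈l n⌉₊))
        (fun n hn => Finset.mem_image_of_mem _ hn)]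
      have inner : ∀ k ∈ v.image (fun n => ⌈l n⌉₊),
          ∑ n ∈ v.filter (fun n => ⌈l n⌉₊ = k), Real.exp (-σ * l n)
            ≤ Real.exp σ * r ^ k := by
        intro k hk
        obtain ⟨n0, hn0v, hn0k⟩ := Finset.mem_image.mp hk
        have hkT1 : T1 ≤ (k:ℝ) :=
          le_trans (hv n0 hn0v).le (by rw [← hn0k]; exact Nat.le_ceil _)
        have hkpos : (0:ℝ) < k := lt_of_lt_of_le hT1pos hkT1
        have hcard : (((v.filter (fun n => ⌈l n⌉₊ = k)).card : ℝ))
            ≤ Real.exp (a * k) := by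
          refine le_trans ?_ (claim k hkT1)
          refine Nat.cast_le.mpr ?_
          rw [← Set.ncard_coe_finset]
          refine Set.ncard_le_ncard ?_ (hfin (k:ℝ) hkpos)
          intro n hn
          simp only [Finset.coe_filter, Set.mem_setOf_eq] at hn
          have : l n ≤ (⌈l n⌉₊ : ℝ) := Nat.le_ceil _
          rw [hn.2] at this
          exact this
        have hterm : ∀ n ∈ v.filter (fun n => ⌈l n⌉₊ = k),
            Real.exp (-σ * l n) ≤ Real.exp σ * Real.exp (-σ * k) := by
          intro n hn
          have hnk : ⌈l n⌉₊ = k := (Finset.mem_filter.mp hn).2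
          have h1 : (k:ℝ) < l n + 1 := by
            rw [← hnk]; exact Nat.ceil_lt_add_one (hl n).le
          rw [← Real.exp_add]
          refine Real.exp_le_exp.mpr ?_
          nlinarith [hl n]
        calc ∑ n ∈ v.filter (fun n => ⌈l n⌉₊ = k), Real.exp (-σ * l n)
            ≤ ∑ _n ∈ v.filter (fun n => ⌈l n⌉₊ = k),
                Real.exp σ * Real.exp (-σ * k) := Finset.sum_le_sum hterm
          _ = ((v.filter (fun n => ⌈l n⌉₊ = k)).card : ℝ) *
                (Real.exp σ * Real.exp (-σ * k)) := by
              rw [Finset.sum_const, nsmul_eq_mul]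
          _ ≤ Real.exp (a * k) * (Real.exp σ * Real.exp (-σ * k)) := by
              refine mul_le_mul_of_nonneg_right hcard (by positivity)
          _ = Real.exp σ * r ^ k := by
              rw [hrdef, ← Real.exp_nat_mul, ← Real.exp_add, ← Real.exp_add,
                ← Real.exp_add, Real.exp_eq_exp]
              ring
      calc ∑ k ∈ v.image (fun n => ⌈l n⌉₊),
            ∑ n ∈ v.filter (fun n => ⌈l n⌉₊ = k), Real.exp (-σ * l n)
          ≤ ∑ k ∈ v.image (fun n => ⌈l n⌉₊), Real.exp σ * r ^ k :=
            Finset.sum_le_sum inner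
        _ = Real.exp σ * ∑ k ∈ v.image (fun n => ⌈l n⌉₊), r ^ k :=
            (Finset.mul_sum _ _ _).symm
        _ ≤ Real.exp σ * (1 - r)⁻¹ := by
            refine mul_le_mul_of_nonneg_left ?_ (Real.exp_pos _).le
            calc ∑ k ∈ v.image (fun n => ⌈l n⌉₊), r ^ k
                ≤ ∑' k : ℕ, r ^ k :=
                  hgeom.sum_le_tsum _ (fun k _ => by positivity)
              _ = (1 - r)⁻¹ := tsum_geometric_of_lt_one hr0.le hr1
    linarith

/-- Absolute convergence of the dynamical zeta function
`ζ_F(s) = ∏_n (1 - e^(-s·l_n))^(-ε_n)` on the half-plane `Re s > max(h, 0)`, where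
`h` is the (finite) topological entropy `limsup_{T→∞} (1/T)·log N(T)`. -/
theorem dynamical_zeta_absolutely_convergent (l : ℕ → ℝ) (hl : ∀ n, 0 < l n)
    (ε : ℕ → ℤ) (hε : ∀ n, ε n = 1 ∨ ε n = -1)
    (hfin : ∀ T : ℝ, 0 < T → {n : ℕ | l n ≤ T}.Finite)
    (h : ℝ)
    (hbdd : IsBoundedUnder (· ≤ ·) atTop
      (fun T : ℝ => Real.log ({n : ℕ | l n ≤ T}.ncard : ℝ) / T))
    (hent : limsup (fun T : ℝ => Real.log ({n : ℕ | l n ≤ T}.ncard : ℝ) / T) atTop = h)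
    (s : ℂ) (hs : max h 0 < s.re) :
    Summable (fun n => ‖Complex.log (1 - Complex.exp (-s * l n))‖) ∧
    Multipliable (fun n => (1 - Complex.exp (-s * l n)) ^ (-(ε n : ℂ))) ∧
    ∏' n, (1 - Complex.exp (-s * l n)) ^ (-(ε n : ℂ))
      = Complex.exp (-∑' n, (ε n : ℂ) * Complex.log (1 - Complex.exp (-s * l n))) := by
  have hσ0 : 0 < s.re := lt_of_le_of_lt (le_max_right h 0) hs
  have hkey : Summable (fun n => Real.exp (-s.re * l n)) :=
    exp_summable_aux l hl hfin h s.re hbdd hent hs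
  -- norm of e^{-s l n}
  have hnorm : ∀ n, ‖Complex.exp (-s * l n)‖ = Real.exp (-s.re * l n) := by
    intro n
    rw [Complex.norm_exp]
    congr 1
    simp [Complex.mul_re]
  have hlt1 : ∀ n, ‖Complex.exp (-s * l n)‖ < 1 := by
    intro n
    rw [hnorm n, Real.exp_lt_one_iff]
    nlinarith [hl n]
  have hne : ∀ n, 1 - Complex.exp (-s * l n) ≠ 0 := by
    intro n hzero
    have : Complex.exp (-s * l n) = 1 := by
      have := sub_eq_zero.mp hzero; exact this.symm
    have h2 := hlt1 n
    rw [this] at h2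
    simp at h2
  -- summability of norms of logs
  have hsum1 : Summable (fun n => ‖Complex.log (1 - Complex.exp (-s * l n))‖) := by
    have hSfin : {n : ℕ | l n ≤ Real.log 2 / s.re}.Finite := by
      rcases le_or_gt (Real.log 2 / s.re) 0 with hle | hlt
      · refine Set.Finite.subset (Set.finite_empty) ?_
        intro n hn
        exact absurd (le_trans hn.out hle) (not_le.mpr (hl n))
      · exact hfin _ hlt
    rw [← hSfin.summable_compl_iff]
    have hbound : ∀ n : (({n : ℕ | l n ≤ Real.log 2 / s.re}ᶜ : Set ℕ)),
        ‖Complex.log (1 - Complex.exp (-s * (l n : ℝ)))‖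
          ≤ (3/2) * Real.exp (-s.re * l n) := by
      rintro ⟨n, hn⟩
      simp only [Set.mem_compl_iff, Set.mem_setOf_eq, not_le] at hn
      have hhalf : ‖-Complex.exp (-s * l n)‖ ≤ 1/2 := by
        rw [norm_neg, hnorm n]
        rw [div_lt_iff₀ hσ0] at hn
        have hle : -s.re * l n ≤ -Real.log 2 := by nlinarith
        calc Real.exp (-s.re * l n) ≤ Real.exp (-Real.log 2) :=
              Real.exp_le_exp.mpr hle
          _ = 1/2 := by
              rw [Real.exp_neg, Real.exp_log (by norm_num : (0:ℝ) < 2)]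
              norm_num
      have := Complex.norm_log_one_add_half_le_self hhalf
      rw [norm_neg, hnorm n] at this
      simpa [sub_eq_add_neg] using this
    refine Summable.of_nonneg_of_le (fun n => norm_nonneg _) hbound ?_
    exact (hkey.subtype _).mul_left (3/2)
  refine ⟨hsum1, ?_⟩
  -- the exponential form
  set g : ℕ → ℂ := fun n => -((ε n : ℂ) * Complex.log (1 - Complex.exp (-s * l n)))
    with hg_def
  have hgs : Summable g := by
    refine Summable.of_norm ?_
    have : ∀ n, ‖g n‖ = ‖Complex.log (1 - Complex.exp (-s * l n))‖ := by
      intro n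
      rw [hg_def]
      simp only [norm_neg, norm_mul]
      rcases hε n with h1 | h1 <;> simp [h1]
    simpa [this] using hsum1
  have hterm : ∀ n, (1 - Complex.exp (-s * l n)) ^ (-(ε n : ℂ))
      = Complex.exp (g n) := by
    intro n
    rw [Complex.cpow_def_of_ne_zero (hne n)]
    simp only [hg_def]
    congr 1
    ring
  have hprod : HasProd (fun n => Complex.exp (g n)) (Complex.exp (∑' n, g n)) :=
    hgs.hasSum.cexp
  have hprod' : HasProd (fun n => (1 - Complex.exp (-s * l n)) ^ (-(ε n : ℂ)))
      (Complex.exp (∑' n, g n)) := by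
    simpa only [hterm] using hprod
  refine ⟨hprod'.multipliable, ?_⟩
  rw [hprod'.tprod_eq]
  congr 1
  rw [hg_def]
  exact tsum_neg
end

section
/- For every s ∈ ℂ with Re(s) > max(h, 0): the double series Σ_n Σ_{k≥1} ε_n·l_n·e^{−k·l_n·s} converges absolutely, and the function F(s) := Σ_n ε_n·Log(1 − e^{−s·l_n}) is complex-differentiable at s with derivative F′(s) = Σ_n Σ_{k≥1} ε_n·l_n·e^{−k·l_n·s}. -/
open Topology Filter


lemma aux_inv_one_sub_exp {y : ℝ} (hy : 0 < y) :
    (1 - Real.exp (-y))⁻¹ ≤ 2 + 3 / y := by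
  have hlt : Real.exp (-y) < 1 := Real.exp_lt_one_iff.mpr (by linarith)
  have hpos : 0 < 1 - Real.exp (-y) := by linarith
  rcases le_or_gt 1 y with hy1 | hy1
  · have he : Real.exp (-y) ≤ Real.exp (-1) := Real.exp_le_exp.mpr (by linarith)
    have he1 : Real.exp (-1) ≤ 1 / 2 := by
      rw [Real.exp_neg]
      rw [inv_le_comm₀ (Real.exp_pos 1) (by norm_num)]
      have := Real.exp_one_gt_d9
      norm_num at this ⊢
      linarith
    have h2 : (1 : ℝ) / 2 ≤ 1 - Real.exp (-y) := by linarith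
    have : (1 - Real.exp (-y))⁻¹ ≤ (1 / 2 : ℝ)⁻¹ := by
      apply inv_anti₀ (by norm_num) h2
    have h3 : 0 ≤ 3 / y := by positivity
    calc (1 - Real.exp (-y))⁻¹ ≤ (1/2 : ℝ)⁻¹ := this
      _ = 2 := by norm_num
      _ ≤ 2 + 3 / y := by linarith
  · have h1 : y + 1 ≤ Real.exp y := Real.add_one_le_exp y
    have h2 : Real.exp (-y) * Real.exp y = 1 := by
      rw [← Real.exp_add]; simp
    have h3 : (1:ℝ)/3 ≤ Real.exp (-y) := by
      have : Real.exp (-y) ≥ Real.exp (-1) := Real.exp_le_exp.mpr (by linarith)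
      have he1 : (1:ℝ)/3 ≤ Real.exp (-1) := by
        rw [Real.exp_neg,_root_.le_inv_comm₀ (by norm_num) (Real.exp_pos 1)]
        have := Real.exp_one_lt_d9
        norm_num at this ⊢
        linarith
      linarith
    have key : y / 3 ≤ 1 - Real.exp (-y) := by
      nlinarith [Real.exp_pos (-y), Real.exp_pos y]
    have hy3 : 0 < y / 3 := by positivity
    have : (1 - Real.exp (-y))⁻¹ ≤ (y/3)⁻¹ := inv_anti₀ hy3 key
    calc (1 - Real.exp (-y))⁻¹ ≤ (y/3)⁻¹ := this
      _ = 3 / y := by rw [inv_div]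
      _ ≤ 2 + 3 / y := by linarith

lemma aux_norm_exp (x : ℝ) (w : ℂ) :
    ‖Complex.exp (-w * x)‖ = Real.exp (-(w.re * x)) := by
  rw [Complex.norm_exp]
  congr 1
  simp [Complex.mul_re]

lemma aux_hasDerivAt {x : ℝ} (hx : 0 < x) {w : ℂ} (hw : 0 < w.re) :
    HasDerivAt (fun z : ℂ => Complex.log (1 - Complex.exp (-z * x)))
      (x * Complex.exp (-w * x) / (1 - Complex.exp (-w * x))) w := by
  have hnorm : ‖Complex.exp (-w * x)‖ < 1 := by
    rw [aux_norm_exp]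
    exact Real.exp_lt_one_iff.mpr (by nlinarith)
  have hre : 0 < (1 - Complex.exp (-w * x)).re := by
    have h1 : (Complex.exp (-w * x)).re ≤ ‖Complex.exp (-w * x)‖ :=
      Complex.re_le_norm _
    simp only [Complex.sub_re, Complex.one_re]
    linarith
  have hmem : 1 - Complex.exp (-w * x) ∈ Complex.slitPlane :=
    Complex.mem_slitPlane_iff.mpr (Or.inl hre)
  have h1 : HasDerivAt (fun z : ℂ => -z * (x:ℂ)) (-(x:ℂ)) w := by
    simpa using (hasDerivAt_id w).neg.mul_const (x:ℂ)
  have h2 := h1.cexp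
  have h3 := h2.const_sub 1
  have h4 : HasDerivAt (fun z : ℂ => 1 - Complex.exp (-z * x))
      ((x:ℂ) * Complex.exp (-w * x)) w := by
    exact h3.congr_deriv (by ring)
  have := h4.clog hmem
  exact this

lemma aux_key_bound {x σ a : ℝ} (hx : 0 < x) (ha : 0 < a) (hσ : a < σ) :
    x * Real.exp (-(x * σ)) * (1 - Real.exp (-(x * σ)))⁻¹
      ≤ (2 / (σ - a) + 3 / σ) * Real.exp (-(a * x)) := by
  have hσ0 : 0 < σ := ha.trans hσ
  have hy : 0 < x * σ := by positivity
  have h1 : (1 - Real.exp (-(x * σ)))⁻¹ ≤ 2 + 3 / (x * σ) := aux_inv_one_sub_exp hy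
  have hpos : 0 < 1 - Real.exp (-(x * σ)) := by
    have : Real.exp (-(x * σ)) < 1 := Real.exp_lt_one_iff.mpr (by linarith)
    linarith
  have hsplit : Real.exp (-(x * σ)) = Real.exp (-((σ - a) * x)) * Real.exp (-(a * x)) := by
    rw [← Real.exp_add]; ring_nf
  have h3 : x * Real.exp (-((σ - a) * x)) ≤ 1 / (σ - a) := by
    have hb : 0 < σ - a := by linarith
    have he := Real.add_one_le_exp ((σ - a) * x)
    have hinv : Real.exp (-((σ - a) * x)) * Real.exp ((σ - a) * x) = 1 := by
      rw [← Real.exp_add]; simp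
    rw [le_div_iff₀ hb]
    nlinarith [Real.exp_pos (-((σ - a) * x)), Real.exp_pos ((σ - a) * x)]
  have hexp_le : Real.exp (-(x * σ)) ≤ Real.exp (-(a * x)) :=
    Real.exp_le_exp.mpr (by nlinarith)
  have step1 : x * Real.exp (-(x * σ)) * (1 - Real.exp (-(x * σ)))⁻¹
      ≤ x * Real.exp (-(x * σ)) * (2 + 3 / (x * σ)) := by
    apply mul_le_mul_of_nonneg_left h1 (by positivity)
  have expand : x * Real.exp (-(x * σ)) * (2 + 3 / (x * σ))
      = 2 * (x * Real.exp (-(x * σ))) + (3 / σ) * Real.exp (-(x * σ)) := by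
    field_simp
  have h2a : 2 * (x * Real.exp (-(x * σ))) ≤ (2 / (σ - a)) * Real.exp (-(a * x)) := by
    rw [hsplit]
    have := mul_le_mul_of_nonneg_right h3 (Real.exp_pos (-(a * x))).le
    calc 2 * (x * (Real.exp (-((σ - a) * x)) * Real.exp (-(a * x))))
        = 2 * ((x * Real.exp (-((σ - a) * x))) * Real.exp (-(a * x))) := by ring
      _ ≤ 2 * ((1 / (σ - a)) * Real.exp (-(a * x))) := by linarith
      _ = (2 / (σ - a)) * Real.exp (-(a * x)) := by ring
  have h2b : (3 / σ) * Real.exp (-(x * σ)) ≤ (3 / σ) * Real.exp (-(a * x)) :=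
    mul_le_mul_of_nonneg_left hexp_le (by positivity)
  calc x * Real.exp (-(x * σ)) * (1 - Real.exp (-(x * σ)))⁻¹
      ≤ x * Real.exp (-(x * σ)) * (2 + 3 / (x * σ)) := step1
    _ = 2 * (x * Real.exp (-(x * σ))) + (3 / σ) * Real.exp (-(x * σ)) := expand
    _ ≤ (2 / (σ - a)) * Real.exp (-(a * x)) + (3 / σ) * Real.exp (-(a * x)) := by linarith
    _ = (2 / (σ - a) + 3 / σ) * Real.exp (-(a * x)) := by ring

lemma aux_log_bound {z : ℂ} {y : ℝ} (hy : 0 < y) (hz : ‖z‖ ≤ Real.exp (-y)) :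
    ‖Complex.log (1 + z)‖ ≤ Real.exp (-y) * (3 + 3 / y) := by
  set T := Real.exp (-y) with hT
  have hT0 : 0 < T := Real.exp_pos _
  have hT1 : T < 1 := Real.exp_lt_one_iff.mpr (by linarith)
  have hz1 : ‖z‖ < 1 := lt_of_le_of_lt hz hT1
  have hb := Complex.norm_log_one_add_le hz1
  have hK : (1 - T)⁻¹ ≤ 2 + 3 / y := aux_inv_one_sub_exp hy
  have hmono : (1 - ‖z‖)⁻¹ ≤ (1 - T)⁻¹ :=
    inv_anti₀ (by linarith) (by linarith)
  have hKz : (1 - ‖z‖)⁻¹ ≤ 2 + 3 / y := hmono.trans hK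
  have hinv0 : 0 ≤ (1 - ‖z‖)⁻¹ := inv_nonneg.mpr (by linarith)
  have ht0 : 0 ≤ ‖z‖ := norm_nonneg z
  have h3y : 0 ≤ 3 / y := by positivity
  have e1 : ‖z‖ ^ 2 * (1 - ‖z‖)⁻¹ ≤ ‖z‖ ^ 2 * (2 + 3 / y) :=
    mul_le_mul_of_nonneg_left hKz (sq_nonneg _)
  have e2 : ‖z‖ ^ 2 ≤ T := by nlinarith
  have e3 : ‖z‖ ^ 2 * (2 + 3 / y) ≤ T * (2 + 3 / y) :=
    mul_le_mul_of_nonneg_right e2 (by linarith)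
  calc ‖Complex.log (1 + z)‖ ≤ ‖z‖ ^ 2 * (1 - ‖z‖)⁻¹ / 2 + ‖z‖ := hb
    _ ≤ T * (2 + 3 / y) / 2 + T := by linarith
    _ ≤ T * (3 + 3 / y) := by nlinarith


lemma aux_summable_exp (l : ℕ → ℝ) (hl : ∀ n, 0 < l n)
    (hfin : ∀ T : ℝ, 0 < T → {n : ℕ | l n ≤ T}.Finite)
    (h : ℝ)
    (hbdd : IsBoundedUnder (· ≤ ·) atTop
      (fun T : ℝ => Real.log ({n : ℕ | l n ≤ T}.ncard : ℝ) / T))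
    (hent : limsup (fun T : ℝ => Real.log ({n : ℕ | l n ≤ T}.ncard : ℝ) / T) atTop = h)
    {a : ℝ} (ha : max h 0 < a) :
    Summable fun n => Real.exp (-(a * l n)) := by
  classical
  set N : ℝ → ℝ := fun T => (({n : ℕ | l n ≤ T}.ncard : ℕ) : ℝ) with hNdef
  have ha0 : 0 < a := lt_of_le_of_lt (le_max_right h 0) ha
  set a' : ℝ := (max h 0 + a) / 2 with ha'def
  have ha'pos : 0 < a' := by
    have h0 : (0:ℝ) ≤ max h 0 := le_max_right h 0
    simp only [ha'def]; linarith
  have ha'lt : a' < a := by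
    have := lt_of_le_of_lt (le_max_left h 0) ha
    simp only [ha'def]
    have h0 : max h 0 < a := ha
    linarith
  have hha' : h < a' := by
    have h0 : h ≤ max h 0 := le_max_left h 0
    have : max h 0 < a := ha
    simp only [ha'def]; linarith
  have hev : ∀ᶠ T in atTop, Real.log (N T) / T < a' :=
    eventually_lt_of_limsup_lt (by rw [hent]; exact hha') hbdd
  obtain ⟨T0, hT0⟩ := eventually_atTop.mp hev
  set T1 : ℝ := max T0 1 with hT1def
  have hT1pos : (0:ℝ) < T1 := lt_of_lt_of_le one_pos (le_max_right _ _)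
  have hNle : ∀ T, T1 ≤ T → N T ≤ Real.exp (a' * T) := by
    intro T hT
    have hTpos : 0 < T := lt_of_lt_of_le hT1pos hT
    have hlog : Real.log (N T) / T < a' := hT0 T (le_trans (le_max_left _ _) hT)
    have hlog' : Real.log (N T) < a' * T := by
      rw [div_lt_iff₀ hTpos] at hlog; linarith [hlog]
    rcases Nat.eq_zero_or_pos {n : ℕ | l n ≤ T}.ncard with h0 | h0
    · simp only [hNdef, h0, Nat.cast_zero]
      exact (Real.exp_pos _).le
    · have hNpos : (0:ℝ) < N T := by
        simp only [hNdef]; exact_mod_cast h0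
      calc N T = Real.exp (Real.log (N T)) := (Real.exp_log hNpos).symm
        _ ≤ Real.exp (a' * T) := Real.exp_le_exp.mpr hlog'.le
  have hB : ∀ m : ℕ, 0 < m → N m ≤ Real.exp (a' * T1) * Real.exp (a' * m) := by
    intro m hm
    have hmR : (0:ℝ) < m := by exact_mod_cast hm
    rcases le_or_gt T1 (m:ℝ) with hc | hc
    · calc N m ≤ Real.exp (a' * m) := hNle m hc
        _ ≤ Real.exp (a' * T1) * Real.exp (a' * m) :=
          le_mul_of_one_le_left (Real.exp_pos _).le
            (Real.one_le_exp (by positivity))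
    · have mono : N m ≤ N T1 := by
        simp only [hNdef]
        exact_mod_cast Set.ncard_le_ncard
          (fun n hn => le_trans hn hc.le) (hfin T1 hT1pos)
      calc N m ≤ N T1 := mono
        _ ≤ Real.exp (a' * T1) := hNle T1 le_rfl
        _ ≤ Real.exp (a' * T1) * Real.exp (a' * m) :=
          le_mul_of_one_le_right (Real.exp_pos _).le
            (Real.one_le_exp (by positivity))
  set r : ℝ := Real.exp (a' - a) with hrdef
  have hr0 : 0 ≤ r := (Real.exp_pos _).le
  have hr1 : r < 1 := Real.exp_lt_one_iff.mpr (by linarith)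
  set D : ℝ := Real.exp (a' * T1) * Real.exp a with hDdef
  have hD0 : 0 ≤ D := by positivity
  apply summable_of_sum_le (c := D * ∑' m : ℕ, r ^ m)
    (fun n => (Real.exp_pos _).le)
  intro F
  have key : ∑ n ∈ F, Real.exp (-(a * l n)) =
      ∑ m ∈ F.image (fun n => ⌈l n⌉₊),
        ∑ n ∈ F.filter (fun n => ⌈l n⌉₊ = m), Real.exp (-(a * l n)) :=
    (Finset.sum_fiberwise_of_maps_to
      (fun x hx => Finset.mem_image_of_mem _ hx) _).symm
  rw [key]
  have step : ∀ m ∈ F.image (fun n => ⌈l n⌉₊),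
      ∑ n ∈ F.filter (fun n => ⌈l n⌉₊ = m), Real.exp (-(a * l n)) ≤ D * r ^ m := by
    intro m hm
    obtain ⟨n0, _, hn0⟩ := Finset.mem_image.mp hm
    have hmpos : 0 < m := hn0 ▸ Nat.ceil_pos.mpr (hl n0)
    have hmR : (0:ℝ) < m := by exact_mod_cast hmpos
    -- each term in fiber bounded
    have hterm : ∀ n ∈ F.filter (fun n => ⌈l n⌉₊ = m),
        Real.exp (-(a * l n)) ≤ Real.exp (a - a * m) := by
      intro n hn
      have hmn : ⌈l n⌉₊ = m := (Finset.mem_filter.mp hn).2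
      have hlt : (m:ℝ) < l n + 1 := by
        rw [← hmn]; exact Nat.ceil_lt_add_one (hl n).le
      exact Real.exp_le_exp.mpr (by nlinarith [ha0])
    have hcard : ((F.filter (fun n => ⌈l n⌉₊ = m)).card : ℝ) ≤ N m := by
      have hsub : F.filter (fun n => ⌈l n⌉₊ = m) ⊆ (hfin m hmR).toFinset := by
        intro n hn
        have hmn : ⌈l n⌉₊ = m := (Finset.mem_filter.mp hn).2
        simp only [Set.Finite.mem_toFinset, Set.mem_setOf_eq]
        calc l n ≤ (⌈l n⌉₊ : ℝ) := Nat.le_ceil _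
          _ = m := by rw [hmn]
      have := Finset.card_le_card hsub
      have hcardeq : (hfin m hmR).toFinset.card = {n : ℕ | l n ≤ (m:ℝ)}.ncard :=
        (Set.ncard_eq_toFinset_card _ (hfin m hmR)).symm
      calc ((F.filter (fun n => ⌈l n⌉₊ = m)).card : ℝ)
          ≤ ((hfin m hmR).toFinset.card : ℝ) := by exact_mod_cast this
        _ = N m := by rw [hcardeq]
    have hsum : ∑ n ∈ F.filter (fun n => ⌈l n⌉₊ = m), Real.exp (-(a * l n))
        ≤ ((F.filter (fun n => ⌈l n⌉₊ = m)).card : ℝ) * Real.exp (a - a * m) := by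
      have := Finset.sum_le_card_nsmul (F.filter (fun n => ⌈l n⌉₊ = m)) _ _ hterm
      simpa [nsmul_eq_mul] using this
    have hNm : N m * Real.exp (a - a * m) ≤ D * r ^ m := by
      have h1 : N m ≤ Real.exp (a' * T1) * Real.exp (a' * m) := hB m hmpos
      have h2 : Real.exp (a' * T1) * Real.exp (a' * m) * Real.exp (a - a * m) = D * r ^ m := by
        rw [hDdef, hrdef, ← Real.exp_nat_mul, ← Real.exp_add, ← Real.exp_add,
          ← Real.exp_add, ← Real.exp_add]
        ring_nf
      calc N m * Real.exp (a - a * m)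
          ≤ Real.exp (a' * T1) * Real.exp (a' * m) * Real.exp (a - a * m) := by
            apply mul_le_mul_of_nonneg_right h1 (Real.exp_pos _).le
        _ = D * r ^ m := h2
    calc ∑ n ∈ F.filter (fun n => ⌈l n⌉₊ = m), Real.exp (-(a * l n))
        ≤ ((F.filter (fun n => ⌈l n⌉₊ = m)).card : ℝ) * Real.exp (a - a * m) := hsum
      _ ≤ N m * Real.exp (a - a * m) :=
          mul_le_mul_of_nonneg_right hcard (Real.exp_pos _).le
      _ ≤ D * r ^ m := hNm
  calc ∑ m ∈ F.image (fun n => ⌈l n⌉₊),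
        ∑ n ∈ F.filter (fun n => ⌈l n⌉₊ = m), Real.exp (-(a * l n))
      ≤ ∑ m ∈ F.image (fun n => ⌈l n⌉₊), D * r ^ m := Finset.sum_le_sum step
    _ = D * ∑ m ∈ F.image (fun n => ⌈l n⌉₊), r ^ m := by rw [Finset.mul_sum]
    _ ≤ D * ∑' m : ℕ, r ^ m := by
        apply mul_le_mul_of_nonneg_left _ hD0
        exact Summable.sum_le_tsum _ (fun i _ => pow_nonneg hr0 i)
          (summable_geometric_of_lt_one hr0 hr1)

private noncomputable def auxF (ε : ℕ → ℤ) (l : ℕ → ℝ) (i : ℕ) (w : ℂ) : ℂ :=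
  (ε i : ℂ) * Complex.log (1 - Complex.exp (-w * l i))


/-- Logarithmic derivative of the dynamical zeta function: for `Re s > max(h, 0)` the
double series `Σ_n Σ_{k≥1} ε_n·l_n·e^(-k·l_n·s)` converges absolutely and
`F(s) = Σ_n ε_n·Log(1 - e^(-s·l_n))` is complex-differentiable at `s` with this derivative. -/
theorem dynamical_zeta_log_deriv (l : ℕ → ℝ) (hl : ∀ n, 0 < l n)
    (ε : ℕ → ℤ) (hε : ∀ n, ε n = 1 ∨ ε n = -1)
    (hfin : ∀ T : ℝ, 0 < T → {n : ℕ | l n ≤ T}.Finite)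
    (h : ℝ)
    (hbdd : IsBoundedUnder (· ≤ ·) atTop
      (fun T : ℝ => Real.log ({n : ℕ | l n ≤ T}.ncard : ℝ) / T))
    (hent : limsup (fun T : ℝ => Real.log ({n : ℕ | l n ≤ T}.ncard : ℝ) / T) atTop = h)
    (s : ℂ) (hs : max h 0 < s.re) :
    Summable (fun p : ℕ × ℕ =>
      ‖(ε p.1 : ℂ) * l p.1 * Complex.exp (-(((p.2 + 1 : ℕ) : ℂ) * l p.1) * s)‖) ∧
    HasDerivAt (fun w : ℂ => ∑' n, (ε n : ℂ) * Complex.log (1 - Complex.exp (-w * l n)))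
      (∑' p : ℕ × ℕ, (ε p.1 : ℂ) * l p.1 * Complex.exp (-(((p.2 + 1 : ℕ) : ℂ) * l p.1) * s))
      s := by
  classical
  have hm0 : (0:ℝ) ≤ max h 0 := le_max_right h 0
  have hσpos : 0 < s.re := lt_of_le_of_lt hm0 hs
  set d : ℝ := (s.re - max h 0) / 3 with hd
  have hd0 : 0 < d := by rw [hd]; linarith
  set a : ℝ := max h 0 + d with hadef
  set σ₀ : ℝ := max h 0 + 2 * d with hσ₀def
  have haM : max h 0 < a := by rw [hadef]; linarith
  have ha0 : 0 < a := lt_of_le_of_lt hm0 haM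
  have haσ₀ : a < σ₀ := by rw [hadef, hσ₀def]; linarith
  have hσ₀pos : 0 < σ₀ := by rw [hσ₀def]; linarith
  have hσ₀s : σ₀ < s.re := by rw [hσ₀def, hd]; linarith
  have haσ : a < s.re := haσ₀.trans hσ₀s
  have hA : Summable fun n => Real.exp (-(a * l n)) := aux_summable_exp l hl hfin h hbdd hent haM
  have hεnorm : ∀ n, ‖((ε n : ℤ) : ℂ)‖ = 1 := by
    intro n; rcases hε n with he | he <;> rw [he] <;> norm_num
  -- the geometric ratio for each n
  set q : ℕ → ℝ := fun n => Real.exp (-(l n * s.re)) with hqdef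
  have hq0 : ∀ n, 0 < q n := fun n => Real.exp_pos _
  have hq1 : ∀ n, q n < 1 := by
    intro n
    exact Real.exp_lt_one_iff.mpr (by nlinarith [hl n])
  -- norm identity
  have hnormeq : ∀ p : ℕ × ℕ,
      ‖(ε p.1 : ℂ) * l p.1 * Complex.exp (-(((p.2 + 1 : ℕ) : ℂ) * l p.1) * s)‖
        = l p.1 * q p.1 ^ (p.2 + 1) := by
    rintro ⟨n, k⟩
    rw [norm_mul, norm_mul, hεnorm n, one_mul, Complex.norm_real,
      Real.norm_eq_abs, abs_of_pos (hl n)]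
    have harg : -((((k + 1 : ℕ)) : ℂ) * (l n : ℂ)) * s
        = (((-(((k + 1 : ℕ) : ℝ) * l n)) : ℝ) : ℂ) * s := by push_cast; ring
    rw [harg, Complex.norm_exp, Complex.re_ofReal_mul]
    congr 1
    rw [hqdef]
    rw [← Real.exp_nat_mul]
    congr 1
    push_cast
    ring
  -- summability of the real double series
  have hg : Summable fun p : ℕ × ℕ => l p.1 * q p.1 ^ (p.2 + 1) := by
    rw [summable_prod_of_nonneg
      (fun p => mul_nonneg (hl p.1).le (pow_nonneg (hq0 p.1).le _))]
    have hhs : ∀ n, HasSum (fun k => l n * q n ^ (k + 1)) (l n * q n * (1 - q n)⁻¹) := by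
      intro n
      have hxn : ‖q n‖ < 1 := by
        rw [Real.norm_eq_abs, abs_of_pos (hq0 n)]; exact hq1 n
      have base := (hasSum_geometric_of_norm_lt_one hxn).mul_left (l n * q n)
      have hfun : (fun k : ℕ => l n * q n * q n ^ k) = fun k => l n * q n ^ (k + 1) := by
        funext k; rw [pow_succ]; ring
      rwa [hfun] at base
    constructor
    · exact fun n => (hhs n).summable
    · apply Summable.congr (f := fun n => l n * q n * (1 - q n)⁻¹)
      · apply Summable.of_nonneg_of_le
          (f := fun n => (2 / (s.re - a) + 3 / s.re) * Real.exp (-(a * l n)))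
        · intro n
          have h1 : 0 < 1 - q n := by linarith [hq1 n]
          exact mul_nonneg (mul_nonneg (hl n).le (hq0 n).le) (inv_nonneg.mpr h1.le)
        · intro n
          exact aux_key_bound (hl n) ha0 haσ
        · exact hA.mul_left _
      · exact fun n => ((hhs n).tsum_eq).symm
  have part1 : Summable (fun p : ℕ × ℕ =>
      ‖(ε p.1 : ℂ) * l p.1 * Complex.exp (-(((p.2 + 1 : ℕ) : ℂ) * l p.1) * s)‖) :=
    hg.congr fun p => (hnormeq p).symm
  refine ⟨part1, ?_⟩
  -- Part 2
  set U : Set ℂ := {w : ℂ | σ₀ < w.re} with hUdef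
  have hUopen : IsOpen U := isOpen_lt continuous_const Complex.continuous_re
  have hsU : s ∈ U := hσ₀s
  set u : ℕ → ℝ := fun i => Real.exp (-(σ₀ * l i)) * (3 + 3 / (σ₀ * l i)) with hudef
  have hle : ∀ (i : ℕ) (w : ℂ), w ∈ U → ‖auxF ε l i w‖ ≤ u i := by
    intro i w hw
    have hwre : σ₀ < w.re := hw
    have hy : 0 < σ₀ * l i := by have := hl i; positivity
    show ‖(ε i : ℂ) * Complex.log (1 - Complex.exp (-w * l i))‖ ≤ u i
    rw [norm_mul, hεnorm i, one_mul]
    have h1 : (1 : ℂ) - Complex.exp (-w * l i) = 1 + -Complex.exp (-w * l i) := by ring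
    rw [h1]
    apply aux_log_bound hy
    rw [norm_neg, aux_norm_exp]
    exact Real.exp_le_exp.mpr (by nlinarith [hl i])
  have hu : Summable u := by
    have hEfin : ({n : ℕ | l n ≤ 1} : Set ℕ).Finite := hfin 1 one_pos
    rw [← hEfin.summable_compl_iff]
    apply Summable.of_nonneg_of_le
      (f := fun x : ↥({n : ℕ | l n ≤ 1}ᶜ) => (3 + 3 / σ₀) * Real.exp (-(a * l x)))
    · intro x
      have hy : 0 < σ₀ * l (x : ℕ) := by have := hl (x : ℕ); positivity
      have : (0:ℝ) ≤ 3 + 3 / (σ₀ * l (x : ℕ)) := by positivity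
      exact mul_nonneg (Real.exp_pos _).le this
    · intro x
      have hx1 : 1 < l (x : ℕ) := by
        have hx2 := x.2
        simp only [Set.mem_compl_iff, Set.mem_setOf_eq, not_le] at hx2
        exact hx2
      have hli : 0 < l (x : ℕ) := hl _
      have e1 : Real.exp (-(σ₀ * l (x : ℕ))) ≤ Real.exp (-(a * l (x : ℕ))) :=
        Real.exp_le_exp.mpr (by nlinarith)
      have e2 : 3 / (σ₀ * l (x : ℕ)) ≤ 3 / σ₀ := by
        apply div_le_div_of_nonneg_left (by norm_num) hσ₀pos
        nlinarith
      show Real.exp (-(σ₀ * l (x : ℕ))) * (3 + 3 / (σ₀ * l (x : ℕ)))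
          ≤ (3 + 3 / σ₀) * Real.exp (-(a * l (x : ℕ)))
      have e3 : (0:ℝ) ≤ 3 + 3 / (σ₀ * l (x : ℕ)) := by positivity
      calc Real.exp (-(σ₀ * l (x : ℕ))) * (3 + 3 / (σ₀ * l (x : ℕ)))
          ≤ Real.exp (-(a * l (x : ℕ))) * (3 + 3 / (σ₀ * l (x : ℕ))) :=
            mul_le_mul_of_nonneg_right e1 e3
        _ ≤ Real.exp (-(a * l (x : ℕ))) * (3 + 3 / σ₀) := by
            apply mul_le_mul_of_nonneg_left (by linarith) (Real.exp_pos _).le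
        _ = (3 + 3 / σ₀) * Real.exp (-(a * l (x : ℕ))) := by ring
    · exact (hA.mul_left (3 + 3 / σ₀)).subtype _
  have hFdiff : ∀ i, DifferentiableOn ℂ (auxF ε l i) U := by
    intro i w hw
    have hd' := ((aux_hasDerivAt (hl i) (hσ₀pos.trans hw)).const_mul ((ε i : ℤ) : ℂ))
    exact hd'.differentiableAt.differentiableWithinAt
  have hder := Complex.hasSum_deriv_of_summable_norm hu hFdiff hUopen hle hsU
  have hdiffOn := Complex.differentiableOn_tsum_of_summable_norm hu hFdiff hUopen hle
  have hFs : HasDerivAt (fun w : ℂ => ∑' i, auxF ε l i w)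
      (deriv (fun w : ℂ => ∑' i, auxF ε l i w) s) s :=
    (hdiffOn.differentiableAt (hUopen.mem_nhds hsU)).hasDerivAt
  have hderiv_eq : ∀ i, deriv (auxF ε l i) s
      = (ε i : ℂ) * ((l i : ℂ) * Complex.exp (-s * l i) / (1 - Complex.exp (-s * l i))) := by
    intro i
    exact ((aux_hasDerivAt (hl i) (hσ₀pos.trans hsU)).const_mul ((ε i : ℤ) : ℂ)).deriv
  -- geometric series identity for each n
  have hsum_term : ∀ n, HasSum
      (fun k : ℕ => (ε n : ℂ) * l n * Complex.exp (-(((k + 1 : ℕ) : ℂ) * l n) * s))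
      ((ε n : ℂ) * ((l n : ℂ) * Complex.exp (-s * l n) / (1 - Complex.exp (-s * l n)))) := by
    intro n
    set x : ℂ := Complex.exp (-s * (l n : ℂ)) with hx
    have hx1 : ‖x‖ < 1 := by
      rw [hx, aux_norm_exp]
      exact Real.exp_lt_one_iff.mpr (by nlinarith [hl n])
    have h2 := (hasSum_geometric_of_norm_lt_one hx1).mul_left ((ε n : ℂ) * l n * x)
    have hfun : (fun k : ℕ => (ε n : ℂ) * l n * x * x ^ k)
        = fun k : ℕ => (ε n : ℂ) * l n * Complex.exp (-(((k + 1 : ℕ) : ℂ) * l n) * s) := by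
      funext k
      have hexp : Complex.exp (-(((k + 1 : ℕ) : ℂ) * l n) * s) = x ^ (k + 1) := by
        rw [hx, ← Complex.exp_nat_mul]
        congr 1
        push_cast
        ring
      rw [hexp, pow_succ]; ring
    rw [hfun] at h2
    have hval : (ε n : ℂ) * l n * x * (1 - x)⁻¹
        = (ε n : ℂ) * ((l n : ℂ) * x / (1 - x)) := by
      rw [div_eq_mul_inv]; ring
    rwa [hval] at h2
  have hsummable_term : Summable (fun p : ℕ × ℕ =>
      (ε p.1 : ℂ) * l p.1 * Complex.exp (-(((p.2 + 1 : ℕ) : ℂ) * l p.1) * s)) :=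
    Summable.of_norm part1
  have step1 : (∑' p : ℕ × ℕ, (ε p.1 : ℂ) * l p.1 *
        Complex.exp (-(((p.2 + 1 : ℕ) : ℂ) * l p.1) * s))
      = ∑' n, ∑' k, (ε n : ℂ) * l n * Complex.exp (-(((k + 1 : ℕ) : ℂ) * l n) * s) :=
    Summable.tsum_prod' hsummable_term fun n => (hsum_term n).summable
  have step2 : ∀ n, (∑' k, (ε n : ℂ) * l n * Complex.exp (-(((k + 1 : ℕ) : ℂ) * l n) * s))
      = deriv (auxF ε l n) s := by
    intro n
    rw [(hsum_term n).tsum_eq, hderiv_eq n]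
  have step3 : (∑' n, deriv (auxF ε l n) s) = deriv (fun w : ℂ => ∑' i, auxF ε l i w) s :=
    hder.tsum_eq
  have final : (∑' p : ℕ × ℕ, (ε p.1 : ℂ) * l p.1 *
        Complex.exp (-(((p.2 + 1 : ℕ) : ℂ) * l p.1) * s))
      = deriv (fun w : ℂ => ∑' i, auxF ε l i w) s := by
    rw [step1, tsum_congr step2, step3]
  rw [final]
  exact hFs
end

section
/- Fix s ∈ ℂ with Re(s) > max(h, 0) and define A(z) := (1/Γ(z))·Σ_n Σ_{k≥1} ε_n·l_n·e^{−k·l_n·s}·(k·l_n)^{z−1} for z ∈ ℂ. Then A is an entire function of z, A(0) = 0, A′(0) = Σ_n Σ_{k≥1} ε_n·e^{−k·l_n·s}/k = −Σ_n ε_n·Log(1 − e^{−s·l_n}), and consequently exp(A′(0)) = ∏_n (1 − e^{−s·l_n})^{−ε_n}. -/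
open Topology Filter

lemma my_geom_sum_le {q : ℝ} (h0 : 0 ≤ q) (h1 : q < 1) (J : ℕ) :
    ∑ j ∈ Finset.range J, q ^ j ≤ (1 - q)⁻¹ := by
  have := Summable.sum_le_tsum (Finset.range J) (fun i _ => pow_nonneg h0 i)
    (summable_geometric_of_lt_one h0 h1)
  rwa [tsum_geometric_of_lt_one h0 h1] at this

lemma my_summable_exp {l : ℕ → ℝ} (hl : ∀ n, 0 < l n)
    (hfin : ∀ T : ℝ, 0 < T → {n : ℕ | l n ≤ T}.Finite)
    {b b' C : ℝ} (hb' : 0 < b') (hbb' : b < b') (hC : 0 ≤ C)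
    (hcount : ∀ j : ℕ, ({n : ℕ | l n ≤ (j : ℝ) + 1}.ncard : ℝ) ≤ C * Real.exp (b * ((j : ℝ) + 1))) :
    Summable (fun n => Real.exp (-b' * l n)) := by
  classical
  set q := Real.exp (b - b') with hqdef
  have hq1 : q < 1 := Real.exp_lt_one_iff.mpr (by linarith)
  have hq0 : 0 ≤ q := (Real.exp_pos _).le
  apply summable_of_sum_le (c := C * Real.exp b * (1 - q)⁻¹) (fun n => (Real.exp_pos _).le)
  intro u
  set g : ℕ → ℕ := fun n => ⌊l n⌋₊ with hg
  set J := u.sup g + 1 with hJ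
  have hmaps : ∀ n ∈ u, g n ∈ Finset.range J :=
    fun n hn => Finset.mem_range.mpr (Nat.lt_succ_of_le (Finset.le_sup hn))
  rw [← Finset.sum_fiberwise_of_maps_to hmaps]
  have key : ∀ j ∈ Finset.range J,
      (∑ n ∈ u.filter (fun n => g n = j), Real.exp (-b' * l n))
        ≤ (C * Real.exp b) * q ^ j := by
    intro j _
    have hjpos : (0:ℝ) < (j : ℝ) + 1 := by positivity
    have hcard : ((u.filter (fun n => g n = j)).card : ℝ) ≤ C * Real.exp (b * ((j : ℝ) + 1)) := by
      refine le_trans ?_ (hcount j)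
      have hsub : (↑(u.filter fun n => g n = j) : Set ℕ) ⊆ {n : ℕ | l n ≤ (j : ℝ) + 1} := by
        intro n hn
        simp only [Finset.coe_filter, Set.mem_setOf_eq] at hn ⊢
        have : l n < (g n : ℝ) + 1 := Nat.lt_floor_add_one (l n)
        rw [hn.2] at this
        linarith
      have := Set.ncard_le_ncard hsub (hfin _ hjpos)
      rw [Set.ncard_coe_finset] at this
      exact_mod_cast this
    have hterm : ∀ n ∈ u.filter (fun n => g n = j),
        Real.exp (-b' * l n) ≤ Real.exp (-b' * (j : ℝ)) := by
      intro n hn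
      have hgn : g n = j := (Finset.mem_filter.mp hn).2
      have : (j : ℝ) ≤ l n := by
        rw [← hgn]; exact Nat.floor_le (hl n).le
      exact Real.exp_le_exp.mpr (by nlinarith)
    calc (∑ n ∈ u.filter (fun n => g n = j), Real.exp (-b' * l n))
        ≤ ∑ _n ∈ u.filter (fun n => g n = j), Real.exp (-b' * (j : ℝ)) :=
          Finset.sum_le_sum hterm
      _ = ((u.filter (fun n => g n = j)).card : ℝ) * Real.exp (-b' * (j : ℝ)) := by
          rw [Finset.sum_const, nsmul_eq_mul]
      _ ≤ (C * Real.exp (b * ((j : ℝ) + 1))) * Real.exp (-b' * (j : ℝ)) :=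
          mul_le_mul_of_nonneg_right hcard (Real.exp_pos _).le
      _ = (C * Real.exp b) * q ^ j := by
          rw [hqdef, ← Real.exp_nat_mul, mul_assoc, ← Real.exp_add, mul_assoc, ← Real.exp_add]
          ring_nf
  calc (∑ j ∈ Finset.range J, ∑ n ∈ u.filter (fun n => g n = j), Real.exp (-b' * l n))
      ≤ ∑ j ∈ Finset.range J, (C * Real.exp b) * q ^ j := Finset.sum_le_sum key
    _ = (C * Real.exp b) * ∑ j ∈ Finset.range J, q ^ j := by rw [Finset.mul_sum]
    _ ≤ (C * Real.exp b) * (1 - q)⁻¹ := by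
        apply mul_le_mul_of_nonneg_left (my_geom_sum_le hq0 hq1 J)
        positivity

lemma my_rpow_bound {K r y R : ℝ} (hK0 : 0 < K) (hK1 : K ≤ 1) (hKr : K ≤ r)
    (hR : 0 ≤ R) (hy : |y| ≤ R) :
    r ^ y ≤ K ^ (-(2 * R)) * r ^ R := by
  have hr0 : 0 < r := lt_of_lt_of_le hK0 hKr
  have hKneg : (1:ℝ) ≤ K ^ (-(2 * R)) := by
    rw [← Real.rpow_zero K]
    exact Real.rpow_le_rpow_of_exponent_ge hK0 hK1 (by linarith)
  rcases le_or_gt 1 r with hr1 | hr1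
  · have h1 : r ^ y ≤ r ^ R := Real.rpow_le_rpow_of_exponent_le hr1 ((le_abs_self y).trans hy)
    have h2 : 0 ≤ r ^ R := (Real.rpow_pos_of_pos hr0 R).le
    nlinarith
  · have hlogr : Real.log r ≤ 0 := Real.log_nonpos hr0.le hr1.le
    have hlogK : Real.log K ≤ Real.log r := Real.log_le_log hK0 hKr
    have h1 : r ^ y ≤ K ^ (-R) := by
      rw [Real.rpow_def_of_pos hr0, Real.rpow_def_of_pos hK0]
      apply Real.exp_le_exp.mpr
      have h3 : Real.log r * y ≤ |y| * (-Real.log r) := by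
        rcases abs_cases y with ⟨hy1, _⟩ | ⟨hy1, _⟩ <;> nlinarith [abs_nonneg y]
      nlinarith
    have h2 : K ^ (-R) = K ^ (-(2 * R)) * K ^ R := by
      rw [← Real.rpow_add hK0]; ring_nf
    have h3 : K ^ R ≤ r ^ R := Real.rpow_le_rpow hK0.le hKr hR
    calc r ^ y ≤ K ^ (-R) := h1
      _ = K ^ (-(2 * R)) * K ^ R := h2
      _ ≤ K ^ (-(2 * R)) * r ^ R :=
          mul_le_mul_of_nonneg_left h3 (Real.rpow_pos_of_pos hK0 _).le

lemma my_poly_exp_bound {R δ t : ℝ} (hR : 0 ≤ R) (hδ : 0 < δ) (ht : 0 ≤ t) :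
    t ^ R * Real.exp (-(δ * t)) ≤ max 1 ((Nat.ceil R).factorial / δ ^ (Nat.ceil R)) := by
  set m := Nat.ceil R with hm
  rcases le_or_gt t 1 with ht1 | ht1
  · have h1 : t ^ R ≤ 1 := Real.rpow_le_one ht ht1 hR
    have h2 : Real.exp (-(δ * t)) ≤ 1 := Real.exp_le_one_iff.mpr (by nlinarith)
    have := mul_le_mul h1 h2 (Real.exp_pos _).le zero_le_one
    simpa using this.trans (le_max_left _ _)
  · have h1 : t ^ R ≤ t ^ (m : ℝ) :=
      Real.rpow_le_rpow_of_exponent_le ht1.le (Nat.le_ceil R)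
    have h2 : t ^ (m : ℝ) = t ^ m := Real.rpow_natCast t m
    have h3 : (δ * t) ^ m / m.factorial ≤ Real.exp (δ * t) :=
      Real.pow_div_factorial_le_exp _ (by nlinarith) m
    have hfac : (0:ℝ) < m.factorial := by exact_mod_cast m.factorial_pos
    have hδm : (0:ℝ) < δ ^ m := pow_pos hδ m
    have h4 : t ^ m * Real.exp (-(δ * t)) ≤ m.factorial / δ ^ m := by
      rw [Real.exp_neg, ← div_eq_mul_inv, div_le_div_iff₀ (Real.exp_pos _) hδm]
      rw [div_le_iff₀ hfac, mul_pow] at h3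
      nlinarith [h3]
    calc t ^ R * Real.exp (-(δ * t)) ≤ t ^ m * Real.exp (-(δ * t)) := by
          rw [← h2]; exact mul_le_mul_of_nonneg_right h1 (Real.exp_pos _).le
      _ ≤ m.factorial / δ ^ m := h4
      _ ≤ _ := le_max_right _ _

set_option maxHeartbeats 1000000 in
/-- Analytic core of Theorem 1.2: with
`A(z) = (1/Γ(z))·Σ_n Σ_{k≥1} ε_n·l_n·e^(-k·l_n·s)·(k·l_n)^(z-1)`, the function `A` is
entire, `A(0) = 0`, `A'(0) = Σ_n Σ_{k≥1} ε_n·e^(-k·l_n·s)/k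
= -Σ_n ε_n·Log(1 - e^(-s·l_n))`, and `exp(A'(0)) = ∏_n (1 - e^(-s·l_n))^(-ε_n)`. -/
theorem regularized_det_equals_zeta (l : ℕ → ℝ) (hl : ∀ n, 0 < l n)
    (ε : ℕ → ℤ) (hε : ∀ n, ε n = 1 ∨ ε n = -1)
    (hfin : ∀ T : ℝ, 0 < T → {n : ℕ | l n ≤ T}.Finite)
    (h : ℝ)
    (hbdd : IsBoundedUnder (· ≤ ·) atTop
      (fun T : ℝ => Real.log ({n : ℕ | l n ≤ T}.ncard : ℝ) / T))
    (hent : limsup (fun T : ℝ => Real.log ({n : ℕ | l n ≤ T}.ncard : ℝ) / T) atTop = h)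
    (s : ℂ) (hs : max h 0 < s.re)
    (A : ℂ → ℂ)
    (hA : A = fun z : ℂ => (Complex.Gamma z)⁻¹ *
      ∑' p : ℕ × ℕ, (ε p.1 : ℂ) * l p.1 * Complex.exp (-(((p.2 + 1 : ℕ) : ℂ) * l p.1) * s) *
        (((((p.2 + 1 : ℕ) : ℝ) * l p.1 : ℝ)) : ℂ) ^ (z - 1))
    (D : ℂ)
    (hD : D = ∑' p : ℕ × ℕ,
      (ε p.1 : ℂ) * Complex.exp (-(((p.2 + 1 : ℕ) : ℂ) * l p.1) * s) / ((p.2 + 1 : ℕ) : ℂ)) :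
    (∀ z : ℂ, AnalyticAt ℂ A z) ∧
    A 0 = 0 ∧
    HasDerivAt A D 0 ∧
    D = -∑' n, (ε n : ℂ) * Complex.log (1 - Complex.exp (-s * l n)) ∧
    Complex.exp D = ∏' n, (1 - Complex.exp (-s * l n)) ^ (-(ε n : ℂ)) := by
  classical
  -- basic constants
  set a : ℝ := s.re with ha
  have ha0 : 0 < a := lt_of_le_of_lt (le_max_right h 0) hs
  set b : ℝ := (max h 0 + a) / 2 with hbdef
  set b' : ℝ := (b + a) / 2 with hb'def
  have hmn : (0:ℝ) ≤ max h 0 := le_max_right h 0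
  have hb0 : 0 < b := by rw [hbdef]; linarith
  have hba : b < a := by rw [hbdef]; linarith
  have hbb' : b < b' := by rw [hb'def]; linarith
  have hb'a : b' < a := by rw [hb'def]; linarith
  have hb'0 : 0 < b' := by linarith
  have hhb : h < b := lt_of_le_of_lt (le_max_left h 0) (by rw [hbdef]; linarith)
  -- norm of ε
  have hεnorm : ∀ n, ‖(ε n : ℂ)‖ = 1 := by
    intro n; rcases hε n with h1 | h1 <;> rw [h1] <;> norm_num
  have hεne : ∀ n, (ε n : ℂ) ≠ 0 := by
    intro n; rcases hε n with h1 | h1 <;> rw [h1] <;> norm_num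
  -- counting bound
  obtain ⟨T₀, hT₀⟩ : ∃ T₀ : ℝ, ∀ T ≥ T₀,
      Real.log ({n : ℕ | l n ≤ T}.ncard : ℝ) / T < b := by
    have hev : ∀ᶠ T in atTop, Real.log ({n : ℕ | l n ≤ T}.ncard : ℝ) / T < b :=
      eventually_lt_of_limsup_lt (by rw [hent]; exact hhb) hbdd
    exact eventually_atTop.mp hev
  set T₁ : ℝ := max T₀ 1 with hT₁
  have hT₁pos : 0 < T₁ := lt_of_lt_of_le one_pos (le_max_right _ _)
  set C : ℝ := max 1 ({n : ℕ | l n ≤ T₁}.ncard : ℝ) with hCdef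
  have hC1 : 1 ≤ C := le_max_left _ _
  have hC0 : 0 ≤ C := by linarith
  have hcount : ∀ j : ℕ,
      ({n : ℕ | l n ≤ (j : ℝ) + 1}.ncard : ℝ) ≤ C * Real.exp (b * ((j : ℝ) + 1)) := by
    intro j
    have hj0 : (0:ℝ) ≤ (j : ℝ) := Nat.cast_nonneg j
    have hexp1 : (1:ℝ) ≤ Real.exp (b * ((j : ℝ) + 1)) :=
      Real.one_le_exp (by positivity)
    rcases le_or_gt ((j : ℝ) + 1) T₁ with hle | hlt
    · have hsub : {n : ℕ | l n ≤ (j : ℝ) + 1} ⊆ {n : ℕ | l n ≤ T₁} :=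
        fun n hn => le_trans hn hle
      have h1 : ({n : ℕ | l n ≤ (j : ℝ) + 1}.ncard : ℝ) ≤ ({n : ℕ | l n ≤ T₁}.ncard : ℝ) := by
        exact_mod_cast Set.ncard_le_ncard hsub (hfin T₁ hT₁pos)
      have h2 : ({n : ℕ | l n ≤ T₁}.ncard : ℝ) ≤ C := le_max_right _ _
      nlinarith
    · have hT := hT₀ ((j : ℝ) + 1) (le_trans (le_max_left _ _) hlt.le)
      set N : ℕ := {n : ℕ | l n ≤ (j : ℝ) + 1}.ncard with hN
      rcases Nat.eq_zero_or_pos N with h0 | hpos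
      · rw [h0]; push_cast; positivity
      · have hNpos : (0:ℝ) < (N : ℝ) := by exact_mod_cast hpos
        have hjj : (0:ℝ) < (j : ℝ) + 1 := by positivity
        rw [div_lt_iff₀ hjj] at hT
        have : (N : ℝ) = Real.exp (Real.log (N : ℝ)) := (Real.exp_log hNpos).symm
        rw [this]
        calc Real.exp (Real.log (N : ℝ)) ≤ Real.exp (b * ((j : ℝ) + 1)) := by
              apply Real.exp_le_exp.mpr; nlinarith
          _ ≤ C * Real.exp (b * ((j : ℝ) + 1)) := by nlinarith
  -- lower bound on l
  obtain ⟨K, hK0, hK1, hKl⟩ : ∃ K : ℝ, 0 < K ∧ K ≤ 1 ∧ ∀ n, K ≤ l n := by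
    set F : Finset ℕ := (hfin 1 one_pos).toFinset with hF
    rcases F.eq_empty_or_nonempty with hFe | hFne
    · refine ⟨1, one_pos, le_refl 1, fun n => ?_⟩
      by_contra hn
      push_neg at hn
      have : n ∈ F := by
        rw [hF, Set.Finite.mem_toFinset]; exact hn.le
      rw [hFe] at this; exact absurd this (Finset.notMem_empty n)
    · have hne : (F.image l).Nonempty := hFne.image l
      refine ⟨min ((F.image l).min' hne) 1, ?_, min_le_right _ _, ?_⟩
      · apply lt_min _ one_pos
        obtain ⟨n, _, hln⟩ := Finset.mem_image.mp ((F.image l).min'_mem hne)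
        rw [← hln]; exact hl n
      · intro n
        by_cases hn : n ∈ F
        · exact le_trans (min_le_left _ _) (Finset.min'_le _ _ (Finset.mem_image_of_mem l hn))
        · have h1 : 1 < l n := by
            by_contra hh
            push_neg at hh
            exact hn (by rw [hF, Set.Finite.mem_toFinset]; exact hh)
          linarith [min_le_right ((F.image l).min' hne) (1:ℝ)]
  -- summability
  have hsum1 : Summable (fun n => Real.exp (-b' * l n)) :=
    my_summable_exp hl hfin hb'0 hbb' hC0 hcount
  obtain ⟨r, hrdef⟩ : ∃ r' : ℕ × ℕ → ℝ, r' = fun p => ((p.2 + 1 : ℕ) : ℝ) * l p.1 := ⟨_, rfl⟩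
  have hrp : ∀ p : ℕ × ℕ, ((p.2 + 1 : ℕ) : ℝ) * l p.1 = r p := fun p => by rw [hrdef]
  have hr0 : ∀ p, 0 < r p := by
    intro p
    rw [← hrp p]
    apply mul_pos _ (hl p.1)
    exact_mod_cast Nat.succ_pos p.2
  have hrl : ∀ p, l p.1 ≤ r p := by
    intro p
    rw [← hrp p]
    have h1 : (1:ℝ) ≤ ((p.2 + 1 : ℕ) : ℝ) := by exact_mod_cast Nat.succ_le_succ (Nat.zero_le p.2)
    nlinarith [hl p.1]
  have hrK : ∀ p, K ≤ r p := fun p => le_trans (hKl p.1) (hrl p)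
  have hsum2 : Summable (fun p : ℕ × ℕ => Real.exp (-b' * r p)) := by
    rw [summable_prod_of_nonneg (fun p => (Real.exp_pos _).le)]
    have hx : ∀ n : ℕ, Real.exp (-b' * l n) < 1 := by
      intro n
      rw [Real.exp_lt_one_iff]
      nlinarith [hl n]
    have hx0 : ∀ n : ℕ, 0 < Real.exp (-b' * l n) := fun n => Real.exp_pos _
    have hre : ∀ n k : ℕ, Real.exp (-b' * r (n, k)) = Real.exp (-b' * l n) ^ (k + 1) := by
      intro n k
      rw [← Real.exp_nat_mul, ← hrp (n, k)]
      congr 1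
      push_cast
      ring
    constructor
    · intro n
      apply Summable.congr (f := fun k : ℕ => Real.exp (-b' * l n) ^ (k + 1))
      · have := (summable_geometric_of_lt_one (hx0 n).le (hx n)).mul_right (Real.exp (-b' * l n))
        apply this.congr
        intro k
        rw [pow_succ]
      · intro k; rw [hre n k]
    · have hxK : ∀ n : ℕ, Real.exp (-b' * l n) ≤ Real.exp (-b' * K) := by
        intro n
        apply Real.exp_le_exp.mpr
        nlinarith [hKl n]
      have hK1' : Real.exp (-b' * K) < 1 := by
        rw [Real.exp_lt_one_iff]; nlinarith
      apply Summable.of_nonneg_of_le (fun n => tsum_nonneg (fun k => (Real.exp_pos _).le))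
        (fun n => ?_) (hsum1.mul_left (1 - Real.exp (-b' * K))⁻¹)
      have heq : ∑' k : ℕ, Real.exp (-b' * r (n, k))
          = (1 - Real.exp (-b' * l n))⁻¹ * Real.exp (-b' * l n) := by
        rw [tsum_congr (fun k => hre n k)]
        have : (fun k : ℕ => Real.exp (-b' * l n) ^ (k + 1))
            = fun k : ℕ => Real.exp (-b' * l n) ^ k * Real.exp (-b' * l n) := by
          funext k; rw [pow_succ]
        rw [this, tsum_mul_right, tsum_geometric_of_lt_one (hx0 n).le (hx n)]
      rw [heq]
      have h1 : (1 - Real.exp (-b' * l n))⁻¹ ≤ (1 - Real.exp (-b' * K))⁻¹ := by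
        apply inv_anti₀ (by linarith [hK1']) (by linarith [hxK n])
      exact mul_le_mul_of_nonneg_right h1 (Real.exp_pos _).le
  -- the function F
  obtain ⟨f, hfdef⟩ : ∃ f' : ℕ × ℕ → ℂ → ℂ, f' = fun p z =>
      (ε p.1 : ℂ) * l p.1 * Complex.exp (-(((p.2 + 1 : ℕ) : ℂ) * l p.1) * s) *
        (((((p.2 + 1 : ℕ) : ℝ) * l p.1 : ℝ)) : ℂ) ^ (z - 1) := ⟨_, rfl⟩
  obtain ⟨F, hFdef⟩ : ∃ F' : ℂ → ℂ, F' = fun z => ∑' p : ℕ × ℕ, f p z := ⟨_, rfl⟩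
  have hAF : A = fun z => (Complex.Gamma z)⁻¹ * F z := by
    rw [hA, hFdef]
    funext z
    simp only [hfdef]
  have hrC : ∀ p : ℕ × ℕ, (((p.2 + 1 : ℕ) : ℂ) * (l p.1 : ℂ)) = ((r p : ℝ) : ℂ) := by
    intro p; rw [← hrp p]; push_cast; ring
  have hnorm : ∀ p z, ‖f p z‖ = l p.1 * Real.exp (-(r p) * s.re) * r p ^ (z.re - 1) := by
    intro p z
    simp only [hfdef, hrp p, hrC p]
    rw [norm_mul, norm_mul, norm_mul, hεnorm p.1, one_mul]
    rw [show (-((r p : ℝ) : ℂ) * s) = ((-(r p) : ℝ) : ℂ) * s by push_cast; ring]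
    rw [Complex.norm_exp,
      Complex.re_ofReal_mul, Complex.norm_cpow_eq_rpow_re_of_pos (hr0 p), Complex.sub_re,
      Complex.one_re, Complex.norm_real, Real.norm_eq_abs, abs_of_pos (hl p.1)]
  -- analyticity of F
  have hFan : ∀ z₀ : ℂ, AnalyticAt ℂ F z₀ := by
    intro z₀
    set R : ℝ := |z₀.re| + 1 with hRdef
    have hR0 : (0:ℝ) ≤ R := by positivity
    set U : Set ℂ := Complex.re ⁻¹' (Set.Ioo (-R) R) with hUdef
    have hUopen : IsOpen U := isOpen_Ioo.preimage Complex.continuous_re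
    have hz₀U : z₀ ∈ U := by
      simp only [hUdef, Set.mem_preimage, Set.mem_Ioo]
      constructor
      · nlinarith [neg_abs_le z₀.re, abs_nonneg z₀.re]
      · nlinarith [le_abs_self z₀.re, abs_nonneg z₀.re]
    set E : ℝ := max 1 (((Nat.ceil (R + 2)).factorial : ℝ) / (a - b') ^ (Nat.ceil (R + 2)))
      with hEdef
    have hE0 : (0:ℝ) ≤ E := le_trans zero_le_one (le_max_left _ _)
    set Q : ℝ := K ^ (-(2 * (R + 1))) with hQdef
    have hQ0 : 0 < Q := Real.rpow_pos_of_pos hK0 _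
    have hu : Summable (fun p : ℕ × ℕ => (Q * E) * Real.exp (-b' * r p)) := hsum2.mul_left _
    have hbound : ∀ (p : ℕ × ℕ), ∀ z ∈ U, ‖f p z‖ ≤ (Q * E) * Real.exp (-b' * r p) := by
      intro p z hz
      simp only [hUdef, Set.mem_preimage, Set.mem_Ioo] at hz
      have habs : |z.re - 1| ≤ R + 1 := by
        rw [abs_le]
        constructor
        · linarith [hz.1]
        · linarith [hz.2]
      rw [hnorm p z]
      have hrpos := hr0 p
      have h1 : r p ^ (z.re - 1) ≤ Q * r p ^ (R + 1) :=
        my_rpow_bound hK0 hK1 (hrK p) (by linarith) habs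
      have h2 : l p.1 * Real.exp (-(r p) * s.re) * r p ^ (z.re - 1)
          ≤ r p * Real.exp (-(r p) * s.re) * (Q * r p ^ (R + 1)) := by
        apply mul_le_mul (mul_le_mul_of_nonneg_right (hrl p) (Real.exp_pos _).le) h1
          (Real.rpow_pos_of_pos hrpos _).le (by positivity)
      have hsplit : Real.exp (-(r p) * a) = Real.exp (-((a - b') * r p)) * Real.exp (-b' * r p) := by
        rw [← Real.exp_add]; congr 1; ring
      have hpow : r p ^ (R + 2) = r p ^ (R + 1) * r p := by
        rw [show (R:ℝ) + 2 = (R + 1) + 1 by ring, Real.rpow_add hrpos, Real.rpow_one]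
      have h3 : r p * Real.exp (-(r p) * a) * (Q * r p ^ (R + 1))
          = Q * (r p ^ (R + 2) * Real.exp (-((a - b') * r p))) * Real.exp (-b' * r p) := by
        rw [hsplit, hpow]; ring
      have h4 : r p ^ (R + 2) * Real.exp (-((a - b') * r p)) ≤ E :=
        my_poly_exp_bound (by linarith) (by linarith) hrpos.le
      calc l p.1 * Real.exp (-(r p) * s.re) * r p ^ (z.re - 1)
          ≤ r p * Real.exp (-(r p) * s.re) * (Q * r p ^ (R + 1)) := h2
        _ = Q * (r p ^ (R + 2) * Real.exp (-((a - b') * r p))) * Real.exp (-b' * r p) := h3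
        _ ≤ (Q * E) * Real.exp (-b' * r p) := by
            apply mul_le_mul_of_nonneg_right _ (Real.exp_pos _).le
            exact mul_le_mul_of_nonneg_left h4 hQ0.le
    have hdiff : ∀ p : ℕ × ℕ, Differentiable ℂ (f p) := by
      intro p
      have hne : ((r p : ℝ) : ℂ) ≠ 0 := by
        exact_mod_cast (hr0 p).ne'
      have heq : f p = fun z =>
          ((ε p.1 : ℂ) * l p.1 * Complex.exp (-(((p.2 + 1 : ℕ) : ℂ) * l p.1) * s)) *
            Complex.exp (Complex.log ((r p : ℝ) : ℂ) * (z - 1)) := by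
        funext z
        simp only [hfdef, hrp p]
        rw [Complex.cpow_def_of_ne_zero hne]
      rw [heq]
      exact (((differentiable_id.sub_const 1).const_mul _).cexp).const_mul _
    have hTLU : TendstoUniformlyOn (fun (t : Finset (ℕ × ℕ)) z => ∑ p ∈ t, f p z)
        (fun z => ∑' p : ℕ × ℕ, f p z) atTop U := tendstoUniformlyOn_tsum hu hbound
    have hdOn : DifferentiableOn ℂ (fun z => ∑' p : ℕ × ℕ, f p z) U := by
      apply hTLU.tendstoLocallyUniformlyOn.differentiableOn _ hUopen
      apply Eventually.of_forall
      intro t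
      apply Differentiable.differentiableOn
      exact Differentiable.fun_sum (fun p _ => hdiff p)
    rw [hFdef]
    exact hdOn.analyticAt (hUopen.mem_nhds hz₀U)
  -- analyticity and value of A
  have hGan : ∀ z : ℂ, AnalyticAt ℂ (fun w : ℂ => (Complex.Gamma w)⁻¹) z :=
    fun z => Complex.differentiable_one_div_Gamma.analyticAt z
  have hAan : ∀ z : ℂ, AnalyticAt ℂ A z := by
    intro z; rw [hAF]; exact (hGan z).mul (hFan z)
  have hA0 : A 0 = 0 := by
    rw [hAF]; simp [Complex.Gamma_zero]
  -- derivative of 1/Γ at 0 equals 1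
  have hGid : (fun z : ℂ => (Complex.Gamma z)⁻¹) = fun z : ℂ => z * (Complex.Gamma (z + 1))⁻¹ := by
    funext z
    by_cases hz : z = 0
    · rw [hz]; simp [Complex.Gamma_zero]
    · rw [Complex.Gamma_add_one z hz, mul_inv, ← mul_assoc, mul_inv_cancel₀ hz, one_mul]
  have hgdiff : DifferentiableAt ℂ (fun z : ℂ => (Complex.Gamma (z + 1))⁻¹) 0 :=
    (Complex.differentiable_one_div_Gamma.comp (differentiable_id.add_const 1)) 0
  have hG1 : HasDerivAt (fun z : ℂ => (Complex.Gamma z)⁻¹) 1 0 := by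
    rw [hGid]
    have h1 : HasDerivAt (fun z : ℂ => z * (Complex.Gamma (z + 1))⁻¹)
        (1 * (Complex.Gamma ((0:ℂ) + 1))⁻¹ +
          0 * deriv (fun z : ℂ => (Complex.Gamma (z + 1))⁻¹) 0) 0 :=
      (hasDerivAt_id 0).mul hgdiff.hasDerivAt
    simpa [Complex.Gamma_one] using h1
  have hFd : HasDerivAt F (deriv F 0) 0 := ((hFan 0).differentiableAt).hasDerivAt
  have hADer : HasDerivAt A (1 * F 0 + (Complex.Gamma 0)⁻¹ * deriv F 0) 0 := by
    rw [hAF]; exact hG1.mul hFd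
  have hADer' : HasDerivAt A (F 0) 0 := by
    simpa [Complex.Gamma_zero] using hADer
  -- F 0 = D
  have hF0D : F 0 = D := by
    rw [hFdef, hD]
    apply tsum_congr
    intro p
    simp only [hfdef]
    rw [zero_sub, Complex.cpow_neg, Complex.cpow_one, hrp p, ← hrC p]
    have hlne : (l p.1 : ℂ) ≠ 0 := Complex.ofReal_ne_zero.mpr (hl p.1).ne'
    have hkne : ((p.2 + 1 : ℕ) : ℂ) ≠ 0 := Nat.cast_ne_zero.mpr (Nat.succ_ne_zero _)
    rw [mul_inv, div_eq_mul_inv]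
    rw [show (↑(ε p.1):ℂ) * ↑(l p.1) * Complex.exp (-(((p.2 + 1 : ℕ):ℂ) * ↑(l p.1)) * s) *
        ((((p.2 + 1 : ℕ):ℂ))⁻¹ * (↑(l p.1))⁻¹)
        = ↑(ε p.1) * Complex.exp (-(((p.2 + 1 : ℕ):ℂ) * ↑(l p.1)) * s) * (((p.2 + 1 : ℕ):ℂ))⁻¹ *
          (↑(l p.1) * (↑(l p.1))⁻¹) from by ring, mul_inv_cancel₀ hlne, mul_one]
  -- the factors 1 - e^{-s l n}
  have hsre : 0 < s.re := by rw [← ha]; exact ha0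
  have hb'sre : b' < s.re := by rw [← ha]; exact hb'a
  have hwnorm : ∀ n : ℕ, ‖Complex.exp (-s * (l n : ℂ))‖ < 1 := by
    intro n
    have hre : (-s * (l n : ℂ)).re = l n * (-s).re := by
      rw [show -s * (l n : ℂ) = ((l n : ℝ) : ℂ) * (-s) by ring, Complex.re_ofReal_mul]
    rw [Complex.norm_exp, hre, Real.exp_lt_one_iff, Complex.neg_re]
    nlinarith [hl n, hsre]
  have hone : ∀ n : ℕ, 1 - Complex.exp (-s * (l n : ℂ)) ≠ 0 := by
    intro n hcon
    have h1 : (1:ℂ) = Complex.exp (-s * (l n : ℂ)) := sub_eq_zero.mp hcon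
    have h2 := hwnorm n
    rw [← h1] at h2
    simp at h2
  -- identify the terms of D
  have hterm : ∀ p : ℕ × ℕ,
      (ε p.1 : ℂ) * Complex.exp (-(((p.2 + 1 : ℕ) : ℂ) * l p.1) * s) / ((p.2 + 1 : ℕ) : ℂ)
        = (ε p.1 : ℂ) *
          (Complex.exp (-s * (l p.1 : ℂ)) ^ (p.2 + 1) / ((p.2 + 1 : ℕ) : ℂ)) := by
    intro p
    rw [← Complex.exp_nat_mul, mul_div_assoc]
    congr 2
    push_cast
    ring
  -- summability of the terms of D
  have hDsummable : Summable (fun p : ℕ × ℕ =>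
      (ε p.1 : ℂ) * Complex.exp (-(((p.2 + 1 : ℕ) : ℂ) * l p.1) * s) / ((p.2 + 1 : ℕ) : ℂ)) := by
    apply Summable.of_norm_bounded hsum2
    intro p
    rw [norm_div, norm_mul, hεnorm p.1, one_mul]
    have h1 : ‖Complex.exp (-(((p.2 + 1 : ℕ) : ℂ) * l p.1) * s)‖ = Real.exp (-(r p) * s.re) := by
      rw [hrC p, show -((r p : ℝ) : ℂ) * s = ((-(r p) : ℝ) : ℂ) * s by push_cast; ring,
        Complex.norm_exp, Complex.re_ofReal_mul]
    have h2 : (1:ℝ) ≤ ‖((p.2 + 1 : ℕ) : ℂ)‖ := by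
      rw [Complex.norm_natCast]
      exact_mod_cast Nat.succ_le_succ (Nat.zero_le p.2)
    have h3 : ‖Complex.exp (-(((p.2 + 1 : ℕ) : ℂ) * l p.1) * s)‖ ≤ Real.exp (-b' * r p) := by
      rw [h1]
      apply Real.exp_le_exp.mpr
      nlinarith [hr0 p, hb'sre]
    calc ‖Complex.exp (-(((p.2 + 1 : ℕ) : ℂ) * l p.1) * s)‖ / ‖((p.2 + 1 : ℕ) : ℂ)‖
        ≤ ‖Complex.exp (-(((p.2 + 1 : ℕ) : ℂ) * l p.1) * s)‖ := div_le_self (norm_nonneg _) h2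
      _ ≤ Real.exp (-b' * r p) := h3
  have hg2sum : HasSum (fun p : ℕ × ℕ => (ε p.1 : ℂ) *
      (Complex.exp (-s * (l p.1 : ℂ)) ^ (p.2 + 1) / ((p.2 + 1 : ℕ) : ℂ))) D := by
    have hg2 : Summable (fun p : ℕ × ℕ => (ε p.1 : ℂ) *
        (Complex.exp (-s * (l p.1 : ℂ)) ^ (p.2 + 1) / ((p.2 + 1 : ℕ) : ℂ))) :=
      hDsummable.congr hterm
    have h1 := hg2.hasSum
    have h2 : ∑' p : ℕ × ℕ, ((ε p.1 : ℂ) *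
        (Complex.exp (-s * (l p.1 : ℂ)) ^ (p.2 + 1) / ((p.2 + 1 : ℕ) : ℂ))) = D := by
      rw [hD]; exact (tsum_congr hterm).symm
    rwa [h2] at h1
  -- fiberwise sums
  have hfib : ∀ n : ℕ, HasSum (fun k : ℕ =>
      (ε n : ℂ) * (Complex.exp (-s * (l n : ℂ)) ^ (k + 1) / ((k + 1 : ℕ) : ℂ)))
      ((ε n : ℂ) * -Complex.log (1 - Complex.exp (-s * (l n : ℂ)))) := by
    intro n
    have h0 := Complex.hasSum_taylorSeries_neg_log (hwnorm n)
    have h1 : HasSum (fun k : ℕ =>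
        Complex.exp (-s * (l n : ℂ)) ^ (k + 1) / ((k + 1 : ℕ) : ℂ))
        (-Complex.log (1 - Complex.exp (-s * (l n : ℂ)))) := by
      have h2 := (hasSum_nat_add_iff
        (f := fun m : ℕ => Complex.exp (-s * (l n : ℂ)) ^ m / (m : ℂ)) 1).mpr (by simpa using h0)
      have h3 : (1 : ℂ) - Complex.exp (-(s * ((l n : ℝ) : ℂ))) = 1 - Complex.exp (-s * (l n : ℂ)) := by
        rw [neg_mul]
      rw [h3] at h2
      exact_mod_cast h2
    exact h1.mul_left _
  have hDfin : HasSum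
      (fun n : ℕ => (ε n : ℂ) * -Complex.log (1 - Complex.exp (-s * (l n : ℂ)))) D :=
    hg2sum.prod_fiberwise hfib
  -- fourth conjunct
  have h4 : D = -∑' n, (ε n : ℂ) * Complex.log (1 - Complex.exp (-s * (l n : ℂ))) := by
    rw [← hDfin.tsum_eq, ← tsum_neg]
    apply tsum_congr
    intro n
    ring
  -- fifth conjunct
  have hfac : ∀ n : ℕ, (1 - Complex.exp (-s * (l n : ℂ))) ^ (-(ε n : ℂ))
      = Complex.exp ((ε n : ℂ) * -Complex.log (1 - Complex.exp (-s * (l n : ℂ)))) := by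
    intro n
    rw [Complex.cpow_def_of_ne_zero (hone n)]
    congr 1
    ring
  have h5 : Complex.exp D = ∏' n, (1 - Complex.exp (-s * (l n : ℂ))) ^ (-(ε n : ℂ)) := by
    have hp := hDfin.cexp
    simp only [Function.comp_def] at hp
    rw [← hp.tprod_eq]
    exact tprod_congr fun n => (hfac n).symm
  exact ⟨hAan, hA0, hF0D ▸ hADer', h4, h5⟩
end
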